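/- arXiv:2511.06498 — 3 statements merged into one kernel-verified Lean document; each statement's English description precedes it below -/
import Mathlib

section
/- Conditional convex ordering of bivariate Bernoulli distributions (Proposition, equivalence (i)⟺(ii)). Let (Y,X) and (Y',X') be random vectors taking values in {0,1}², with p := P(X=1) ∈ (0,1), q := P(Y=1) ∈ (0,1), α := P(Y=0, X=0)/(1−p), β := P(Y=0, X=1)/p, and p', q', α', β' defined analogously for (Y',X'). Then (Y,X) ⪯ccx (Y',X') if and only if q = q', min(α',β') ≤ min(α,β), and max(α,β) ≤ max(α',β'). -/
open MeasureTheory ProbabilityTheory Set Filter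

noncomputable section

namespace CCXPaper

variable {Ω Ω' : Type*} [MeasurableSpace Ω] [MeasurableSpace Ω']

/-- A measure is non-atomic in the measure-theoretic sense: every set of positive
measure contains a measurable subset of strictly smaller positive measure. -/
def Nonatomic (P : Measure Ω) : Prop :=
  ∀ s : Set Ω, MeasurableSet s → 0 < P s →
    ∃ t : Set Ω, MeasurableSet t ∧ t ⊆ s ∧ 0 < P t ∧ P t < P s

/-- Cumulative distribution function of the real random variable `Y` under `P`. -/
def cdfRV (P : Measure Ω) (Y : Ω → ℝ) (y : ℝ) : ℝ :=
  (P {ω | Y ω ≤ y}).toReal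

/-- Quantile function `q_Y(v) = inf {y | F_Y(y) ≥ v}`. -/
def quantRV (P : Measure Ω) (Y : Ω → ℝ) (v : ℝ) : ℝ :=
  sInf {y : ℝ | v ≤ cdfRV P Y y}

/-- Convex order between real random variables (on possibly different spaces):
`E[φ(S)] ≤ E[φ(T)]` for every convex `φ : ℝ → ℝ`. -/
def CxLE (P : Measure Ω) (S : Ω → ℝ) (P' : Measure Ω') (T : Ω' → ℝ) : Prop :=
  ∀ φ : ℝ → ℝ, ConvexOn ℝ Set.univ φ →
    ∫ ω, φ (S ω) ∂P ≤ ∫ ω, φ (T ω) ∂P'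

/-- Conditional probability `P(s | X)` as a random variable (a version of the
conditional expectation of the indicator of `s` given `σ(X)`). -/
def condProb {β : Type*} [MeasurableSpace β] (P : Measure Ω) (X : Ω → β) (s : Set Ω) :
    Ω → ℝ :=
  P[s.indicator (fun _ => (1 : ℝ)) | MeasurableSpace.comap X inferInstance]

/-- Conditional survival probability `P(Y ≥ y | X)`. -/
def condProbGE {β : Type*} [MeasurableSpace β] (P : Measure Ω) (Y : Ω → ℝ) (X : Ω → β)
    (y : ℝ) : Ω → ℝ :=
  condProb P X {ω | y ≤ Y ω}

/-- Conditional strict survival probability `P(Y > y | X)`. -/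
def condProbGT {β : Type*} [MeasurableSpace β] (P : Measure Ω) (Y : Ω → ℝ) (X : Ω → β)
    (y : ℝ) : Ω → ℝ :=
  condProb P X {ω | y < Y ω}

/-- Conditional cumulative probability `P(Y ≤ y | X)`. -/
def condProbLE {β : Type*} [MeasurableSpace β] (P : Measure Ω) (Y : Ω → ℝ) (X : Ω → β)
    (y : ℝ) : Ω → ℝ :=
  condProb P X {ω | Y ω ≤ y}

/-- Conditional strict cumulative probability `P(Y < y | X)`. -/
def condProbLT {β : Type*} [MeasurableSpace β] (P : Measure Ω) (Y : Ω → ℝ) (X : Ω → β)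
    (y : ℝ) : Ω → ℝ :=
  condProb P X {ω | Y ω < y}

/-- The conditional convex order `(Y, X) ⪯ccx (Y', X')`:
`P(Y ≥ q_Y(v) | X) ≤cx P(Y' ≥ q_{Y'}(v) | X')` for all `v ∈ (0,1)`. -/
def CCX {β γ : Type*} [MeasurableSpace β] [MeasurableSpace γ]
    (P : Measure Ω) (Y : Ω → ℝ) (X : Ω → β)
    (P' : Measure Ω') (Y' : Ω' → ℝ) (X' : Ω' → γ) : Prop :=
  ∀ v ∈ Set.Ioo (0 : ℝ) 1,
    CxLE P (condProbGE P Y X (quantRV P Y v)) P' (condProbGE P' Y' X' (quantRV P' Y' v))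

/-- Equality in the conditional convex order: `(Y, X) =ccx (Y', X')`. -/
def CCXeq {β γ : Type*} [MeasurableSpace β] [MeasurableSpace γ]
    (P : Measure Ω) (Y : Ω → ℝ) (X : Ω → β)
    (P' : Measure Ω') (Y' : Ω' → ℝ) (X' : Ω' → γ) : Prop :=
  CCX P Y X P' Y' X' ∧ CCX P' Y' X' P Y X

/-- `Y` and `Z` are conditionally independent given `X`: for every Borel `B ⊆ ℝ`,
`P(Y ∈ B | (X, Z)) = P(Y ∈ B | X)` almost surely. -/
def CondIndepGiven {β γ : Type*} [MeasurableSpace β] [MeasurableSpace γ]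
    (P : Measure Ω) (Y : Ω → ℝ) (Z : Ω → γ) (X : Ω → β) : Prop :=
  ∀ B : Set ℝ, MeasurableSet B →
    condProb P (fun ω => (X ω, Z ω)) (Y ⁻¹' B) =ᵐ[P] condProb P X (Y ⁻¹' B)

/-- `Y` is perfectly dependent on `X`: `Y = f(X)` a.s. for some measurable `f`. -/
def PerfectDep {β : Type*} [MeasurableSpace β] (P : Measure Ω) (Y : Ω → ℝ) (X : Ω → β) :
    Prop :=
  ∃ f : β → ℝ, Measurable f ∧ Y =ᵐ[P] fun ω => f (X ω)

/-- Concordance order for bivariate random vectors `(T, S) ≤c (T', S')`. -/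
def ConcordLE (P : Measure Ω) (T S : Ω → ℝ) (P' : Measure Ω') (T' S' : Ω' → ℝ) : Prop :=
  ∀ t s : ℝ,
    P {ω | T ω ≤ t ∧ S ω ≤ s} ≤ P' {ω | T' ω ≤ t ∧ S' ω ≤ s} ∧
    P {ω | t < T ω ∧ s < S ω} ≤ P' {ω | t < T' ω ∧ s < S' ω}

/-- The bivariate random vector `(W₁, W₂)` is stochastically increasing (SI):
for each bounded increasing `f`, a version of `E[f(W₁) | W₂]` is an increasing
function of `W₂`. -/
def SIvec (P : Measure Ω) (W₁ W₂ : Ω → ℝ) : Prop :=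
  ∀ f : ℝ → ℝ, Monotone f → (∃ C : ℝ, ∀ x, |f x| ≤ C) →
    ∃ m : ℝ → ℝ, Monotone m ∧
      (fun ω => m (W₂ ω)) =ᵐ[P]
        P[(fun ω => f (W₁ ω)) | MeasurableSpace.comap W₂ inferInstance]

/-- `G` is a cumulative distribution function on `ℝ`. -/
def IsCDF (G : ℝ → ℝ) : Prop :=
  Monotone G ∧ (∀ y : ℝ, ContinuousWithinAt G (Set.Ici y) y) ∧
    Tendsto G atBot (nhds 0) ∧ Tendsto G atTop (nhds 1)

/-- `(F u)_{u ∈ (0,1)}` is a rearranged conditional distribution family for `(Y, X)`: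
each `F u` is a cdf, `u ↦ F u y` is decreasing, and for each `y` the function
`u ↦ F u y` on `(0,1)` is a rearrangement of (i.e. equidistributed with)
`P(Y ≤ y | X)`. -/
def IsRearrangedFamily {β : Type*} [MeasurableSpace β]
    (P : Measure Ω) (Y : Ω → ℝ) (X : Ω → β) (F : ℝ → ℝ → ℝ) : Prop :=
  (∀ u ∈ Set.Ioo (0 : ℝ) 1, IsCDF (F u)) ∧
  (∀ y : ℝ, AntitoneOn (fun u => F u y) (Set.Ioo (0 : ℝ) 1)) ∧
  (∀ y w : ℝ,
    volume {u ∈ Set.Ioo (0 : ℝ) 1 | w ≤ F u y} = P {ω | w ≤ condProbLE P Y X y ω})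

/-- Rearranged quantile transform `q^{↑u}_{Y|X}(t) = inf {y | F_u(y) ≥ t}`. -/
def qArr (F : ℝ → ℝ → ℝ) (u t : ℝ) : ℝ :=
  sInf {y : ℝ | t ≤ F u y}

/-- The uniform distribution on `(0,1)`. -/
def unif01 : Measure ℝ := volume.restrict (Set.Ioo (0 : ℝ) 1)

/-- `hs` is a decreasing rearrangement of `h : (0,1)^k → ℝ`. -/
def IsDecRearrangement {k : ℕ} (h : (Fin k → ℝ) → ℝ) (hs : ℝ → ℝ) : Prop :=
  AntitoneOn hs (Set.Ioo (0 : ℝ) 1) ∧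
  ∀ w : ℝ,
    volume {t ∈ Set.Ioo (0 : ℝ) 1 | w ≤ hs t} =
      volume {x ∈ Set.pi Set.univ (fun _ : Fin k => Set.Ioo (0 : ℝ) 1) | w ≤ h x}

/-- Schur order `f ≺_S g` for functions on unit cubes, via decreasing rearrangements. -/
def SchurLE {d d' : ℕ} (f : (Fin d → ℝ) → ℝ) (g : (Fin d' → ℝ) → ℝ) : Prop :=
  ∃ fs gs : ℝ → ℝ, IsDecRearrangement f fs ∧ IsDecRearrangement g gs ∧
    (∀ x ∈ Set.Ioo (0 : ℝ) 1,
      (∫ t in Set.Ioo (0 : ℝ) x, fs t) ≤ ∫ t in Set.Ioo (0 : ℝ) x, gs t) ∧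
    (∫ t in Set.Ioo (0 : ℝ) 1, fs t) = ∫ t in Set.Ioo (0 : ℝ) 1, gs t

/-- `κ` is a Markov-kernel version of the conditional cdf of `Y` given `X`. -/
def IsCondCDFKernel {β : Type*} [MeasurableSpace β]
    (P : Measure Ω) (Y : Ω → ℝ) (X : Ω → β) (κ : β → ℝ → ℝ) : Prop :=
  (∀ y : ℝ, Measurable fun x => κ x y) ∧
  ∀ y : ℝ, (fun ω => κ (X ω) y) =ᵐ[P] condProbLE P Y X y

/-- The dependence measure `ξ_φ(Y, X)` (with conditional cdf kernel `κ`). -/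
def xiPhi {β : Type*} [MeasurableSpace β] (P : Measure Ω) (Y : Ω → ℝ) (X : Ω → β)
    (κ : β → ℝ → ℝ) (φ : ℝ → ℝ) : ℝ :=
  (∫ y1, ∫ y, φ ((if y1 ≤ y then (1 : ℝ) else 0) - cdfRV P Y y) ∂(P.map Y) ∂(P.map Y))⁻¹ *
    ∫ x, ∫ y, φ (κ x y - cdfRV P Y y) ∂(P.map Y) ∂(P.map X)

/-- The dependence measure `Λ_φ(Y, X)` (with conditional cdf kernel `κ`). -/
def LamPhi {β : Type*} [MeasurableSpace β] (P : Measure Ω) (Y : Ω → ℝ) (X : Ω → β)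
    (κ : β → ℝ → ℝ) (φ : ℝ → ℝ) : ℝ :=
  (∫ y12 : ℝ × ℝ, ∫ y,
      φ ((if y12.1 ≤ y then (1 : ℝ) else 0) - if y12.2 ≤ y then (1 : ℝ) else 0)
      ∂(P.map Y) ∂((P.map Y).prod (P.map Y)))⁻¹ *
    ∫ x12 : β × β, ∫ y, φ (κ x12.1 y - κ x12.2 y) ∂(P.map Y) ∂((P.map X).prod (P.map X))

/-- `φ` vanishes at `0` and is strictly convex at `0`. -/
def StrictlyConvexAtZero (φ : ℝ → ℝ) : Prop :=
  φ 0 = 0 ∧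
    ∀ s t lam : ℝ, s < 0 → 0 < t → 0 < lam → lam < 1 → lam * s + (1 - lam) * t = 0 →
      0 < lam * φ s + (1 - lam) * φ t

/-- `μ` is the (possibly degenerate) Gaussian distribution `N(m, S)` on `ℝ^d`,
characterized via its characteristic function. -/
def IsGaussianPi {d : ℕ} (μ : Measure (Fin d → ℝ)) (m : Fin d → ℝ)
    (S : Matrix (Fin d) (Fin d) ℝ) : Prop :=
  ∀ t : Fin d → ℝ,
    (∫ x, Complex.exp (Complex.I * ((∑ i, t i * x i : ℝ) : ℂ)) ∂μ) =
      Complex.exp (Complex.I * ((∑ i, t i * m i : ℝ) : ℂ) -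
        ((∑ i, ∑ j, t i * S i j * t j : ℝ) : ℂ) / 2)

/-- `Y` and `X` are comonotone. -/
def Comonotone (P : Measure Ω) (Y X : Ω → ℝ) : Prop :=
  ∃ U : Ω → ℝ, Measurable U ∧ P.map U = unif01 ∧
    P.map (fun ω => (Y ω, X ω)) =
      P.map (fun ω => (quantRV P Y (U ω), quantRV P X (U ω)))

/-- `Y` and `X` are countermonotone. -/
def Countermonotone (P : Measure Ω) (Y X : Ω → ℝ) : Prop :=
  ∃ U : Ω → ℝ, Measurable U ∧ P.map U = unif01 ∧
    P.map (fun ω => (Y ω, X ω)) =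
      P.map (fun ω => (quantRV P Y (U ω), quantRV P X (1 - U ω)))

end CCXPaper


section CCXAux

open CCXPaper

variable {Ω : Type*} [MeasurableSpace Ω]

lemma CCXPaper.convexOn_affine (m b : ℝ) : ConvexOn ℝ Set.univ (fun x => m * x + b) := by
  refine ⟨convex_univ, fun x _ y _ t s ht hs hts => ?_⟩
  simp only [smul_eq_mul]
  have : m * (t * x + s * y) + b = t * (m * x + b) + s * (m * y + b) := by
    linear_combination (-b) * hts
  linarith [this.le]

lemma CCXPaper.convexOn_hinge_right (d : ℝ) :
    ConvexOn ℝ Set.univ (fun x => max (x - d) 0) := by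
  have h := (CCXPaper.convexOn_affine 1 (-d)).sup (convexOn_const (0 : ℝ) convex_univ)
  convert h using 1
  · rfl
  · rfl
  funext x
  simp [Pi.sup_apply, sub_eq_add_neg]

lemma CCXPaper.convexOn_hinge_left (c : ℝ) :
    ConvexOn ℝ Set.univ (fun x => max (c - x) 0) := by
  have h := (CCXPaper.convexOn_affine (-1) c).sup (convexOn_const (0 : ℝ) convex_univ)
  convert h using 1
  · rfl
  · rfl
  funext x
  simp [Pi.sup_apply, sub_eq_add_neg, add_comm]

lemma CCXPaper.max_one_sub (x y : ℝ) : max (1 - x) (1 - y) = 1 - min x y := by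
  rcases le_total x y with h | h
  · rw [min_eq_left h, max_eq_left (by linarith)]
  · rw [min_eq_right h, max_eq_right (by linarith)]

lemma CCXPaper.min_one_sub (x y : ℝ) : min (1 - x) (1 - y) = 1 - max x y := by
  rcases le_total x y with h | h
  · rw [max_eq_right h, min_eq_right (by linarith)]
  · rw [max_eq_left h, min_eq_left (by linarith)]

lemma CCXPaper.chord_bound {φ : ℝ → ℝ} (hφ : ConvexOn ℝ Set.univ φ) {c d x : ℝ}
    (hcd : c < d) (hcx : c ≤ x) (hxd : x ≤ d) :
    φ x ≤ φ c + (φ d - φ c) / (d - c) * (x - c) := by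
  have hdc : (0:ℝ) < d - c := by linarith
  have key := hφ.2 (Set.mem_univ c) (Set.mem_univ d)
    (div_nonneg (by linarith : (0:ℝ) ≤ d - x) hdc.le)
    (div_nonneg (by linarith : (0:ℝ) ≤ x - c) hdc.le)
    (by field_simp; ring)
  simp only [smul_eq_mul] at key
  have hx : (d - x) / (d - c) * c + (x - c) / (d - c) * d = x := by
    field_simp; ring
  rw [hx] at key
  calc φ x ≤ (d - x) / (d - c) * φ c + (x - c) / (d - c) * φ d := key
    _ = φ c + (φ d - φ c) / (d - c) * (x - c) := by field_simp; ring

lemma CCXPaper.two_point_cx {p p' a0 a1 b0 b1 : ℝ} (hp0 : 0 ≤ p) (hp1 : p ≤ 1)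
    (hp0' : 0 ≤ p') (hp1' : p' ≤ 1)
    (hmean : a0 * (1 - p) + a1 * p = b0 * (1 - p') + b1 * p')
    (hmin : min b0 b1 ≤ min a0 a1) (hmax : max a0 a1 ≤ max b0 b1)
    {φ : ℝ → ℝ} (hφ : ConvexOn ℝ Set.univ φ) :
    φ a0 * (1 - p) + φ a1 * p ≤ φ b0 * (1 - p') + φ b1 * p' := by
  set c := min b0 b1 with hc
  set d := max b0 b1 with hd
  have hcd : c ≤ d := min_le_max
  have ha0c : c ≤ a0 := hmin.trans (min_le_left _ _)
  have ha1c : c ≤ a1 := hmin.trans (min_le_right _ _)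
  have ha0d : a0 ≤ d := (le_max_left _ _).trans hmax
  have ha1d : a1 ≤ d := (le_max_right _ _).trans hmax
  rcases eq_or_lt_of_le hcd with heq | hlt
  · have h01 : b0 ≤ b1 := by
      have h := le_max_left b0 b1
      rw [← hd, ← heq, hc] at h
      exact h.trans (min_le_right _ _)
    have h10 : b1 ≤ b0 := by
      have h := le_max_right b0 b1
      rw [← hd, ← heq, hc] at h
      exact h.trans (min_le_left _ _)
    have hb0 : b0 = c := by rw [hc, min_eq_left h01]
    have hb1 : b1 = c := by rw [hc, min_eq_right h10]
    have ha0 : a0 = c := le_antisymm (by rw [heq]; exact ha0d) ha0c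
    have ha1 : a1 = c := le_antisymm (by rw [heq]; exact ha1d) ha1c
    rw [ha0, ha1, hb0, hb1]
    have e1 : φ c * (1 - p) + φ c * p = φ c := by ring
    have e2 : φ c * (1 - p') + φ c * p' = φ c := by ring
    linarith
  · set L : ℝ → ℝ := fun x => φ c + (φ d - φ c) / (d - c) * (x - c) with hL
    have hb : φ b0 * (1 - p') + φ b1 * p' = L (b0 * (1 - p') + b1 * p') := by
      have hLc : L c = φ c := by simp [hL]
      have hLd : L d = φ d := by
        simp only [hL]
        rw [div_mul_cancel₀]
        · ring
        · linarith
      have hLaff : ∀ x y : ℝ, L (x * (1 - p') + y * p') = L x * (1 - p') + L y * p' := by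
        intro x y; simp only [hL]; ring
      rcases le_total b0 b1 with h | h
      · have h0 : b0 = c := by rw [hc, min_eq_left h]
        have h1 : b1 = d := by rw [hd, max_eq_right h]
        rw [h0, h1, hLaff, hLc, hLd]
      · have h0 : b0 = d := by rw [hd, max_eq_left h]
        have h1 : b1 = c := by rw [hc, min_eq_right h]
        rw [h0, h1, hLaff, hLc, hLd]
    have h0 := CCXPaper.chord_bound hφ hlt ha0c ha0d
    have h1 := CCXPaper.chord_bound hφ hlt ha1c ha1d
    have key : φ a0 * (1 - p) + φ a1 * p ≤ L (a0 * (1 - p) + a1 * p) := by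
      have := add_le_add (mul_le_mul_of_nonneg_right h0 (by linarith : (0:ℝ) ≤ 1 - p))
        (mul_le_mul_of_nonneg_right h1 hp0)
      calc φ a0 * (1 - p) + φ a1 * p
          ≤ (φ c + (φ d - φ c) / (d - c) * (a0 - c)) * (1 - p)
            + (φ c + (φ d - φ c) / (d - c) * (a1 - c)) * p := this
        _ = L (a0 * (1 - p) + a1 * p) := by simp only [hL]; ring
    rw [hb, ← hmean]
    exact key

lemma CCXPaper.meas_split (P : Measure Ω) [IsProbabilityMeasure P] {Z : Ω → ℝ}
    (hZ : Measurable Z) (hZval : ∀ ω, Z ω = 0 ∨ Z ω = 1) (s : Set Ω) :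
    (P (s ∩ {ω | Z ω = 0})).toReal + (P (s ∩ {ω | Z ω = 1})).toReal = (P s).toReal := by
  have hcompl : s ∩ {ω | Z ω = 0} = s \ {ω | Z ω = 1} := by
    ext ω
    simp only [Set.mem_inter_iff, Set.mem_setOf_eq, Set.mem_diff]
    constructor
    · rintro ⟨hs, h0⟩; exact ⟨hs, by rw [h0]; norm_num⟩
    · rintro ⟨hs, h1⟩; exact ⟨hs, (hZval ω).resolve_right h1⟩
  have hms : MeasurableSet {ω | Z ω = 1} := hZ (measurableSet_singleton 1)
  rw [hcompl, ← ENNReal.toReal_add (measure_ne_top _ _) (measure_ne_top _ _), add_comm,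
    measure_inter_add_diff s hms]

lemma CCXPaper.integrable_of_two_point (P : Measure Ω) [IsProbabilityMeasure P] {X : Ω → ℝ}
    (hX : Measurable X) (hXval : ∀ ω, X ω = 0 ∨ X ω = 1) : Integrable X P := by
  refine (integrable_const (1 : ℝ)).mono' hX.aestronglyMeasurable (ae_of_all _ fun ω => ?_)
  rcases hXval ω with h | h <;> simp [h]

lemma CCXPaper.integral_two_point (P : Measure Ω) [IsProbabilityMeasure P] {X : Ω → ℝ}
    (hX : Measurable X) (hXval : ∀ ω, X ω = 0 ∨ X ω = 1) :
    ∫ ω, X ω ∂P = (P {ω | X ω = 1}).toReal := by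
  have h : X = Set.indicator {ω | X ω = 1} (fun _ => (1:ℝ)) := by
    funext ω
    rcases hXval ω with h | h <;> simp [h, Set.indicator_apply]
  have hms : MeasurableSet {ω | X ω = 1} := hX (measurableSet_singleton 1)
  conv_lhs => rw [h]
  rw [integral_indicator hms]
  simp
  rfl

lemma CCXPaper.integral_fun_two_point (P : Measure Ω) [IsProbabilityMeasure P] {X : Ω → ℝ}
    (hX : Measurable X) (hXval : ∀ ω, X ω = 0 ∨ X ω = 1) (c0 c1 : ℝ) :
    ∫ ω, (c0 * (1 - X ω) + c1 * X ω) ∂P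
      = c0 * (1 - (P {ω | X ω = 1}).toReal) + c1 * (P {ω | X ω = 1}).toReal := by
  have hint := CCXPaper.integrable_of_two_point P hX hXval
  have h1 : Integrable (fun ω => c0 * (1 - X ω)) P :=
    (((integrable_const (1:ℝ)).sub hint).const_mul c0)
  have h2 : Integrable (fun ω => c1 * X ω) P := hint.const_mul c1
  rw [integral_add h1 h2, integral_const_mul, integral_const_mul,
    integral_sub (integrable_const 1) hint, integral_const,
    CCXPaper.integral_two_point P hX hXval]
  simp

lemma CCXPaper.integral_comp_two_point (P : Measure Ω) [IsProbabilityMeasure P] {X : Ω → ℝ}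
    (hX : Measurable X) (hXval : ∀ ω, X ω = 0 ∨ X ω = 1) (c0 c1 : ℝ)
    {S : Ω → ℝ} (hS : S =ᵐ[P] fun ω => c0 * (1 - X ω) + c1 * X ω) (φ : ℝ → ℝ) :
    ∫ ω, φ (S ω) ∂P
      = φ c0 * (1 - (P {ω | X ω = 1}).toReal) + φ c1 * (P {ω | X ω = 1}).toReal := by
  have h1 : (fun ω => φ (S ω)) =ᵐ[P] fun ω => φ c0 * (1 - X ω) + φ c1 * X ω := by
    filter_upwards [hS] with ω hω
    rcases hXval ω with h | h <;> rw [hω, h] <;> norm_num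
  rw [integral_congr_ae h1, CCXPaper.integral_fun_two_point P hX hXval]

lemma CCXPaper.condProb_two_point (P : Measure Ω) [IsProbabilityMeasure P] {X : Ω → ℝ}
    (hX : Measurable X) (hXval : ∀ ω, X ω = 0 ∨ X ω = 1)
    (hp0 : (P {ω | X ω = 0}).toReal ≠ 0) (hp1 : (P {ω | X ω = 1}).toReal ≠ 0)
    (s : Set Ω) (hs : MeasurableSet s) :
    condProb P X s =ᵐ[P] fun ω =>
      (P (s ∩ {ω | X ω = 0})).toReal / (P {ω | X ω = 0}).toReal * (1 - X ω)
      + (P (s ∩ {ω | X ω = 1})).toReal / (P {ω | X ω = 1}).toReal * X ω := by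
  classical
  set a0 : ℝ := (P (s ∩ {ω | X ω = 0})).toReal / (P {ω | X ω = 0}).toReal with ha0
  set a1 : ℝ := (P (s ∩ {ω | X ω = 1})).toReal / (P {ω | X ω = 1}).toReal with ha1
  set g : Ω → ℝ := fun ω => a0 * (1 - X ω) + a1 * X ω with hg
  have hm : MeasurableSpace.comap X inferInstance ≤ (inferInstance : MeasurableSpace Ω) :=
    hX.comap_le
  haveI : SigmaFinite (P.trim hm) := by
    have : IsFiniteMeasure (P.trim hm) := isFiniteMeasure_trim hm
    infer_instance
  have hms0 : MeasurableSet {ω | X ω = 0} := hX (measurableSet_singleton 0)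
  have hms1 : MeasurableSet {ω | X ω = 1} := hX (measurableSet_singleton 1)
  have hgpt : ∀ ω, (X ω = 0 → g ω = a0) ∧ (X ω = 1 → g ω = a1) := by
    intro ω
    constructor <;> intro h <;> simp [hg, h]
  have hXint : Integrable X P := by
    refine (integrable_const (1 : ℝ)).mono' hX.aestronglyMeasurable (ae_of_all _ fun ω => ?_)
    rcases hXval ω with h | h <;> simp [h]
  have hgint : Integrable g P :=
    (((integrable_const (1:ℝ)).sub hXint).const_mul a0).add (hXint.const_mul a1)
  have hsetint : ∀ A : Set Ω, MeasurableSet A →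
      ∫ ω in A, g ω ∂P
        = a0 * (P (A ∩ {ω | X ω = 0})).toReal + a1 * (P (A ∩ {ω | X ω = 1})).toReal := by
    intro A hA
    have hdisj : Disjoint (A ∩ {ω | X ω = 0}) (A ∩ {ω | X ω = 1}) := by
      refine Set.disjoint_left.2 fun ω h0 h1 => ?_
      have := h0.2; have := h1.2
      simp_all
    have hA01 : A = (A ∩ {ω | X ω = 0}) ∪ (A ∩ {ω | X ω = 1}) := by
      ext ω
      simp only [Set.mem_union, Set.mem_inter_iff, Set.mem_setOf_eq]
      constructor
      · intro h; rcases hXval ω with h' | h'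
        · exact Or.inl ⟨h, h'⟩
        · exact Or.inr ⟨h, h'⟩
      · rintro (⟨h, _⟩ | ⟨h, _⟩) <;> exact h
    have e0 : ∫ ω in A ∩ {ω | X ω = 0}, g ω ∂P = a0 * (P (A ∩ {ω | X ω = 0})).toReal := by
      rw [setIntegral_congr_fun (hA.inter hms0) (fun ω hω => (hgpt ω).1 hω.2),
        setIntegral_const]
      simp [mul_comm]
      exact Or.inl rfl
    have e1 : ∫ ω in A ∩ {ω | X ω = 1}, g ω ∂P = a1 * (P (A ∩ {ω | X ω = 1})).toReal := by
      rw [setIntegral_congr_fun (hA.inter hms1) (fun ω hω => (hgpt ω).2 hω.2),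
        setIntegral_const]
      simp [mul_comm]
      exact Or.inl rfl
    calc ∫ ω in A, g ω ∂P
        = ∫ ω in (A ∩ {ω | X ω = 0}) ∪ (A ∩ {ω | X ω = 1}), g ω ∂P := by rw [← hA01]
      _ = (∫ ω in A ∩ {ω | X ω = 0}, g ω ∂P) + ∫ ω in A ∩ {ω | X ω = 1}, g ω ∂P := by
          exact setIntegral_union hdisj (hA.inter hms1) hgint.integrableOn hgint.integrableOn
      _ = _ := by rw [e0, e1]
  refine (ae_eq_condExp_of_forall_setIntegral_eq hm
    ((integrable_const (1:ℝ)).indicator hs) (fun A _ _ => hgint.integrableOn)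
    (fun A hA _ => ?_) ?_).symm
  · obtain ⟨B, hB, rfl⟩ := hA
    have hmsA : MeasurableSet (X ⁻¹' B) := hX hB
    rw [hsetint _ hmsA, setIntegral_indicator hs]
    have hswap : X ⁻¹' B ∩ s = s ∩ X ⁻¹' B := Set.inter_comm _ _
    rw [hswap, setIntegral_const]
    simp only [smul_eq_mul, mul_one]
    have hcap : ∀ i : ℝ, X ⁻¹' B ∩ {ω | X ω = i} = if i ∈ B then {ω | X ω = i} else ∅ := by
      intro i
      split_ifs with hi
      · ext ω; simp only [Set.mem_inter_iff, Set.mem_preimage, Set.mem_setOf_eq]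
        exact ⟨fun h => h.2, fun h => ⟨by rw [h]; exact hi, h⟩⟩
      · ext ω; simp only [Set.mem_inter_iff, Set.mem_preimage, Set.mem_setOf_eq,
          Set.mem_empty_iff_false, iff_false, not_and]
        intro hB' h; rw [h] at hB'; exact hi hB'
    have hsplit : s ∩ X ⁻¹' B =
        (if (0:ℝ) ∈ B then s ∩ {ω | X ω = 0} else ∅)
          ∪ (if (1:ℝ) ∈ B then s ∩ {ω | X ω = 1} else ∅) := by
      ext ω
      rcases hXval ω with h | h <;>
        · simp only [Set.mem_inter_iff, Set.mem_preimage, Set.mem_union, h]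
          split_ifs with h0 h1 <;>
            simp_all [Set.mem_inter_iff, Set.mem_setOf_eq, (by norm_num : (0:ℝ) ≠ 1),
              (by norm_num : (1:ℝ) ≠ 0)]
    have hdisj2 : Disjoint (s ∩ {ω | X ω = 0}) (s ∩ {ω | X ω = 1}) := by
      refine Set.disjoint_left.2 fun ω h0 h1 => ?_
      have := h0.2; have := h1.2; simp_all
    have key0 : a0 * (P {ω | X ω = 0}).toReal = (P (s ∩ {ω | X ω = 0})).toReal :=
      div_mul_cancel₀ _ hp0
    have key1 : a1 * (P {ω | X ω = 1}).toReal = (P (s ∩ {ω | X ω = 1})).toReal :=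
      div_mul_cancel₀ _ hp1
    rw [hcap 0, hcap 1, hsplit]
    by_cases h0 : (0:ℝ) ∈ B <;> by_cases h1 : (1:ℝ) ∈ B
    · rw [if_pos h0, if_pos h1, if_pos h0, if_pos h1,
        measureReal_union hdisj2 (hs.inter hms1)]
      simp only [measureReal_def] at *
      linarith
    · rw [if_pos h0, if_neg h1, if_pos h0, if_neg h1, Set.union_empty]
      simp only [measure_empty, ENNReal.toReal_zero, mul_zero, add_zero]
      exact key0
    · rw [if_neg h0, if_pos h1, if_neg h0, if_pos h1, Set.empty_union]
      simp only [measure_empty, ENNReal.toReal_zero, mul_zero, zero_add]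
      exact key1
    · rw [if_neg h0, if_neg h1, if_neg h0, if_neg h1, Set.union_empty]
      simp
  · refine StronglyMeasurable.aestronglyMeasurable ?_
    have hXm : Measurable[MeasurableSpace.comap X inferInstance] X :=
      Measurable.of_comap_le le_rfl
    exact (((measurable_const.sub hXm).const_mul a0).add (hXm.const_mul a1)).stronglyMeasurable

lemma CCXPaper.prob_eq_zero_toReal (P : Measure Ω) [IsProbabilityMeasure P] {Y : Ω → ℝ}
    (hY : Measurable Y) (hYval : ∀ ω, Y ω = 0 ∨ Y ω = 1) :
    (P {ω | Y ω = 0}).toReal = 1 - (P {ω | Y ω = 1}).toReal := by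
  have hcompl : {ω | Y ω = 0} = {ω | Y ω = 1}ᶜ := by
    ext ω
    simp only [Set.mem_setOf_eq, Set.mem_compl_iff]
    constructor
    · intro h h1; rw [h] at h1; norm_num at h1
    · intro h; exact (hYval ω).resolve_right h
  have hms : MeasurableSet {ω | Y ω = 1} := hY (measurableSet_singleton 1)
  rw [hcompl, measure_compl hms (measure_ne_top _ _),
    measure_univ, ENNReal.toReal_sub_of_le prob_le_one (by norm_num)]
  simp

lemma CCXPaper.quant_bernoulli (P : Measure Ω) [IsProbabilityMeasure P] {Y : Ω → ℝ}
    (hY : Measurable Y) (hYval : ∀ ω, Y ω = 0 ∨ Y ω = 1)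
    {v : ℝ} (hv : v ∈ Set.Ioo (0:ℝ) 1) :
    quantRV P Y v = if v ≤ 1 - (P {ω | Y ω = 1}).toReal then 0 else 1 := by
  set q : ℝ := (P {ω | Y ω = 1}).toReal with hqdef
  have hcdf_neg : ∀ y : ℝ, y < 0 → cdfRV P Y y = 0 := by
    intro y hy
    have : {ω | Y ω ≤ y} = ∅ := by
      ext ω; simp only [Set.mem_setOf_eq, Set.mem_empty_iff_false, iff_false, not_le]
      rcases hYval ω with h | h <;> rw [h] <;> linarith
    rw [cdfRV, this]; simp
  have hcdf_mid : ∀ y : ℝ, 0 ≤ y → y < 1 → cdfRV P Y y = 1 - q := by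
    intro y h0 h1
    have : {ω | Y ω ≤ y} = {ω | Y ω = 0} := by
      ext ω; simp only [Set.mem_setOf_eq]
      rcases hYval ω with h | h <;> rw [h] <;> constructor <;> intro h' <;> first
        | rfl | linarith
    rw [cdfRV, this, CCXPaper.prob_eq_zero_toReal P hY hYval]
  have hcdf_hi : ∀ y : ℝ, 1 ≤ y → cdfRV P Y y = 1 := by
    intro y h1
    have : {ω | Y ω ≤ y} = Set.univ := by
      ext ω; simp only [Set.mem_setOf_eq, Set.mem_univ, iff_true]
      rcases hYval ω with h | h <;> rw [h] <;> linarith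
    rw [cdfRV, this]; simp
  split_ifs with hvq
  · refine le_antisymm (csInf_le ⟨0, fun y hy => ?_⟩ ?_) (le_csInf ⟨0, ?_⟩ fun y hy => ?_)
    · by_contra hneg
      push_neg at hneg
      rw [Set.mem_setOf_eq, hcdf_neg y hneg] at hy
      linarith [hv.1]
    · rw [Set.mem_setOf_eq, hcdf_mid 0 le_rfl one_pos]; exact hvq
    · rw [Set.mem_setOf_eq, hcdf_mid 0 le_rfl one_pos]; exact hvq
    · by_contra hneg
      push_neg at hneg
      rw [Set.mem_setOf_eq, hcdf_neg y (by linarith)] at hy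
      linarith [hv.1]
  · push_neg at hvq
    refine le_antisymm (csInf_le ⟨1, fun y hy => ?_⟩ ?_) (le_csInf ⟨1, ?_⟩ fun y hy => ?_)
    · by_contra hneg
      push_neg at hneg
      rw [Set.mem_setOf_eq] at hy
      rcases lt_or_ge y 0 with h | h
      · rw [hcdf_neg y h] at hy; linarith [hv.1]
      · rw [hcdf_mid y h hneg] at hy; linarith
    · rw [Set.mem_setOf_eq, hcdf_hi 1 le_rfl]; exact hv.2.le
    · rw [Set.mem_setOf_eq, hcdf_hi 1 le_rfl]; exact hv.2.le
    · by_contra hneg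
      push_neg at hneg
      rw [Set.mem_setOf_eq] at hy
      rcases lt_or_ge y 0 with h | h
      · rw [hcdf_neg y h] at hy; linarith [hv.1]
      · rw [hcdf_mid y h hneg] at hy; linarith

lemma CCXPaper.bernoulli_repr (P : Measure Ω) [IsProbabilityMeasure P]
    (Y X : Ω → ℝ) (hY : Measurable Y) (hX : Measurable X)
    (hYval : ∀ ω, Y ω = 0 ∨ Y ω = 1) (hXval : ∀ ω, X ω = 0 ∨ X ω = 1)
    (hp : (P {ω | X ω = 1}).toReal ∈ Set.Ioo (0:ℝ) 1)
    {v : ℝ} (hv : v ∈ Set.Ioo (0:ℝ) 1) (φ : ℝ → ℝ) :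
    ∫ ω, φ (condProbGE P Y X (quantRV P Y v) ω) ∂P =
      if v ≤ 1 - (P {ω | Y ω = 1}).toReal then φ 1
      else φ (1 - (P {ω | Y ω = 0 ∧ X ω = 0}).toReal / (1 - (P {ω | X ω = 1}).toReal))
              * (1 - (P {ω | X ω = 1}).toReal)
           + φ (1 - (P {ω | Y ω = 0 ∧ X ω = 1}).toReal / (P {ω | X ω = 1}).toReal)
              * (P {ω | X ω = 1}).toReal := by
  set p : ℝ := (P {ω | X ω = 1}).toReal with hpdef
  have hp0R : (P {ω | X ω = 0}).toReal = 1 - p := CCXPaper.prob_eq_zero_toReal P hX hXval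
  have hpne : p ≠ 0 := ne_of_gt hp.1
  have h1pne : (1:ℝ) - p ≠ 0 := by have := hp.2; intro h; linarith
  rw [CCXPaper.quant_bernoulli P hY hYval hv]
  split_ifs with hvq
  · -- quantile is 0, conditional prob is constant 1
    have huniv : {ω | (0:ℝ) ≤ Y ω} = Set.univ := by
      ext ω; simp only [Set.mem_setOf_eq, Set.mem_univ, iff_true]
      rcases hYval ω with h | h <;> rw [h] <;> norm_num
    have hm : MeasurableSpace.comap X inferInstance ≤ (inferInstance : MeasurableSpace Ω) :=
      hX.comap_le
    haveI : SigmaFinite (P.trim hm) := by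
      have : IsFiniteMeasure (P.trim hm) := isFiniteMeasure_trim hm
      infer_instance
    have hconst : condProbGE P Y X 0 =ᵐ[P] fun ω => (1:ℝ) * (1 - X ω) + 1 * X ω := by
      have h1 : condProbGE P Y X 0 = condProb P X Set.univ := by
        rw [condProbGE, huniv]
      have h2 : condProb P X Set.univ =ᵐ[P] fun _ => (1:ℝ) := by
        rw [condProb, Set.indicator_univ, condExp_const hm (1:ℝ)]
      rw [h1]
      filter_upwards [h2] with ω hω
      rw [hω]; ring
    rw [CCXPaper.integral_comp_two_point P hX hXval 1 1 hconst φ]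
    ring
  · -- quantile is 1, conditional prob of {Y = 1}
    have hone : {ω | (1:ℝ) ≤ Y ω} = {ω | Y ω = 1} := by
      ext ω; simp only [Set.mem_setOf_eq]
      rcases hYval ω with h | h <;> rw [h] <;> constructor <;> intro h' <;> first
        | rfl | linarith | norm_num at h'
    have hmsY : MeasurableSet {ω | Y ω = 1} := hY (measurableSet_singleton 1)
    have hS := CCXPaper.condProb_two_point P hX hXval
      (by rw [hp0R]; exact h1pne) (by rw [← hpdef]; exact hpne) _ hmsY
    have hS' : condProbGE P Y X 1 =ᵐ[P] fun ω =>
        (P ({ω | Y ω = 1} ∩ {ω | X ω = 0})).toReal / (1 - p) * (1 - X ω)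
        + (P ({ω | Y ω = 1} ∩ {ω | X ω = 1})).toReal / p * X ω := by
      rw [condProbGE, hone]
      rw [hp0R] at hS
      exact hS
    rw [CCXPaper.integral_comp_two_point P hX hXval _ _ hS' φ]
    -- identify the constants
    have hsum0 : (P ({ω | X ω = 0} ∩ {ω | Y ω = 0})).toReal
        + (P ({ω | X ω = 0} ∩ {ω | Y ω = 1})).toReal = 1 - p := by
      rw [CCXPaper.meas_split P hY hYval {ω | X ω = 0}, hp0R]
    have hsum1 : (P ({ω | X ω = 1} ∩ {ω | Y ω = 0})).toReal
        + (P ({ω | X ω = 1} ∩ {ω | Y ω = 1})).toReal = p := by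
      rw [CCXPaper.meas_split P hY hYval {ω | X ω = 1}]
    have hc00 : {ω | X ω = 0} ∩ {ω | Y ω = 0} = {ω | Y ω = 0 ∧ X ω = 0} := by
      rw [Set.inter_comm]; rfl
    have hc10 : {ω | Y ω = 1} ∩ {ω | X ω = 0} = {ω | X ω = 0} ∩ {ω | Y ω = 1} :=
      Set.inter_comm _ _
    have hc01 : {ω | X ω = 1} ∩ {ω | Y ω = 0} = {ω | Y ω = 0 ∧ X ω = 1} := by
      rw [Set.inter_comm]; rfl
    have hc11 : {ω | Y ω = 1} ∩ {ω | X ω = 1} = {ω | X ω = 1} ∩ {ω | Y ω = 1} :=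
      Set.inter_comm _ _
    rw [hc00] at hsum0
    rw [hc01] at hsum1
    rw [hc10, hc11]
    have e0 : (P ({ω | X ω = 0} ∩ {ω | Y ω = 1})).toReal / (1 - p)
        = 1 - (P {ω | Y ω = 0 ∧ X ω = 0}).toReal / (1 - p) := by
      field_simp
      linarith
    have e1 : (P ({ω | X ω = 1} ∩ {ω | Y ω = 1})).toReal / p
        = 1 - (P {ω | Y ω = 0 ∧ X ω = 1}).toReal / p := by
      field_simp
      linarith
    rw [e0, e1]

lemma CCXPaper.bernoulli_mean (P : Measure Ω) [IsProbabilityMeasure P]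
    (Y X : Ω → ℝ) (hY : Measurable Y) (hX : Measurable X)
    (hYval : ∀ ω, Y ω = 0 ∨ Y ω = 1) (hXval : ∀ ω, X ω = 0 ∨ X ω = 1)
    (hp : (P {ω | X ω = 1}).toReal ∈ Set.Ioo (0:ℝ) 1) :
    (1 - (P {ω | Y ω = 0 ∧ X ω = 0}).toReal / (1 - (P {ω | X ω = 1}).toReal))
        * (1 - (P {ω | X ω = 1}).toReal)
      + (1 - (P {ω | Y ω = 0 ∧ X ω = 1}).toReal / (P {ω | X ω = 1}).toReal)
        * (P {ω | X ω = 1}).toReal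
      = (P {ω | Y ω = 1}).toReal := by
  set p : ℝ := (P {ω | X ω = 1}).toReal with hpdef
  have hpne : p ≠ 0 := ne_of_gt hp.1
  have h1pne : (1:ℝ) - p ≠ 0 := by have := hp.2; intro h; linarith
  have hc00 : {ω | Y ω = 0} ∩ {ω | X ω = 0} = {ω | Y ω = 0 ∧ X ω = 0} := rfl
  have hc01 : {ω | Y ω = 0} ∩ {ω | X ω = 1} = {ω | Y ω = 0 ∧ X ω = 1} := rfl
  have hsplitY : (P ({ω | Y ω = 0} ∩ {ω | X ω = 0})).toReal
      + (P ({ω | Y ω = 0} ∩ {ω | X ω = 1})).toReal = (P {ω | Y ω = 0}).toReal :=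
    CCXPaper.meas_split P hX hXval {ω | Y ω = 0}
  rw [hc00, hc01, CCXPaper.prob_eq_zero_toReal P hY hYval] at hsplitY
  field_simp
  linarith

end CCXAux

lemma CCXPaper.cx_core_necessity {p p' a0 a1 b0 b1 : ℝ}
    (hp : 0 < p) (hp1 : p < 1) (hp' : 0 < p') (hp1' : p' < 1)
    (H : ∀ φ : ℝ → ℝ, ConvexOn ℝ Set.univ φ →
      φ a0 * (1 - p) + φ a1 * p ≤ φ b0 * (1 - p') + φ b1 * p') :
    a0 * (1 - p) + a1 * p = b0 * (1 - p') + b1 * p' ∧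
      min b0 b1 ≤ min a0 a1 ∧ max a0 a1 ≤ max b0 b1 := by
  have hid := H (fun x => 1 * x + 0) (CCXPaper.convexOn_affine 1 0)
  have hneg := H (fun x => -1 * x + 0) (CCXPaper.convexOn_affine (-1) 0)
  refine ⟨by linarith, ?_, ?_⟩
  · -- min b ≤ min a, via left hinge at c = min b0 b1
    have hcb0 : min b0 b1 ≤ b0 := min_le_left _ _
    have hcb1 : min b0 b1 ≤ b1 := min_le_right _ _
    have hh := H (fun x => max (min b0 b1 - x) 0) (CCXPaper.convexOn_hinge_left (min b0 b1))
    rw [max_eq_right (by linarith : min b0 b1 - b0 ≤ 0),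
      max_eq_right (by linarith : min b0 b1 - b1 ≤ 0)] at hh
    have h0 : (0:ℝ) ≤ max (min b0 b1 - a0) 0 := le_max_right _ _
    have h1 : (0:ℝ) ≤ max (min b0 b1 - a1) 0 := le_max_right _ _
    have ha0 : max (min b0 b1 - a0) 0 = 0 := by nlinarith
    have ha1 : max (min b0 b1 - a1) 0 = 0 := by nlinarith
    have e0 : min b0 b1 - a0 ≤ 0 := ha0 ▸ le_max_left _ _
    have e1 : min b0 b1 - a1 ≤ 0 := ha1 ▸ le_max_left _ _
    exact le_min (by linarith) (by linarith)
  · -- max a ≤ max b, via right hinge at d = max b0 b1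
    have hdb0 : b0 ≤ max b0 b1 := le_max_left _ _
    have hdb1 : b1 ≤ max b0 b1 := le_max_right _ _
    have hh := H (fun x => max (x - max b0 b1) 0) (CCXPaper.convexOn_hinge_right (max b0 b1))
    rw [max_eq_right (by linarith : b0 - max b0 b1 ≤ 0),
      max_eq_right (by linarith : b1 - max b0 b1 ≤ 0)] at hh
    have h0 : (0:ℝ) ≤ max (a0 - max b0 b1) 0 := le_max_right _ _
    have h1 : (0:ℝ) ≤ max (a1 - max b0 b1) 0 := le_max_right _ _
    have ha0 : max (a0 - max b0 b1) 0 = 0 := by nlinarith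
    have ha1 : max (a1 - max b0 b1) 0 = 0 := by nlinarith
    have e0 : a0 - max b0 b1 ≤ 0 := ha0 ▸ le_max_left _ _
    have e1 : a1 - max b0 b1 ≤ 0 := ha1 ▸ le_max_left _ _
    exact max_le (by linarith) (by linarith)

open CCXPaper in
/-- Conditional convex ordering of bivariate Bernoulli distributions:
with `p = P(X=1)`, `q = P(Y=1)`, `α = P(Y=0, X=0)/(1−p)`, `β = P(Y=0, X=1)/p`
(and primed quantities for `(Y', X')`), one has `(Y, X) ⪯ccx (Y', X')` iff
`q = q'`, `min(α', β') ≤ min(α, β)` and `max(α, β) ≤ max(α', β')`. -/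
theorem ccx_bernoulli_characterization
    {Ω : Type*} [MeasurableSpace Ω] (P : Measure Ω) [IsProbabilityMeasure P]
    (hPna : Nonatomic P)
    (Y X Y' X' : Ω → ℝ)
    (hY : Measurable Y) (hX : Measurable X) (hY' : Measurable Y') (hX' : Measurable X')
    (hYval : ∀ ω, Y ω = 0 ∨ Y ω = 1) (hXval : ∀ ω, X ω = 0 ∨ X ω = 1)
    (hY'val : ∀ ω, Y' ω = 0 ∨ Y' ω = 1) (hX'val : ∀ ω, X' ω = 0 ∨ X' ω = 1)
    (hp : (P {ω | X ω = 1}).toReal ∈ Set.Ioo (0 : ℝ) 1)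
    (hq : (P {ω | Y ω = 1}).toReal ∈ Set.Ioo (0 : ℝ) 1)
    (hp' : (P {ω | X' ω = 1}).toReal ∈ Set.Ioo (0 : ℝ) 1)
    (hq' : (P {ω | Y' ω = 1}).toReal ∈ Set.Ioo (0 : ℝ) 1) :
    CCX P Y X P Y' X' ↔
      ((P {ω | Y ω = 1}).toReal = (P {ω | Y' ω = 1}).toReal ∧
        min ((P {ω | Y' ω = 0 ∧ X' ω = 0}).toReal / (1 - (P {ω | X' ω = 1}).toReal))
            ((P {ω | Y' ω = 0 ∧ X' ω = 1}).toReal / (P {ω | X' ω = 1}).toReal) ≤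
          min ((P {ω | Y ω = 0 ∧ X ω = 0}).toReal / (1 - (P {ω | X ω = 1}).toReal))
            ((P {ω | Y ω = 0 ∧ X ω = 1}).toReal / (P {ω | X ω = 1}).toReal) ∧
        max ((P {ω | Y ω = 0 ∧ X ω = 0}).toReal / (1 - (P {ω | X ω = 1}).toReal))
            ((P {ω | Y ω = 0 ∧ X ω = 1}).toReal / (P {ω | X ω = 1}).toReal) ≤
          max ((P {ω | Y' ω = 0 ∧ X' ω = 0}).toReal / (1 - (P {ω | X' ω = 1}).toReal))
            ((P {ω | Y' ω = 0 ∧ X' ω = 1}).toReal / (P {ω | X' ω = 1}).toReal)) := by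
  constructor
  · -- necessity
    intro hccx
    have hmean1 := CCXPaper.bernoulli_mean P Y X hY hX hYval hXval hp
    have hmean2 := CCXPaper.bernoulli_mean P Y' X' hY' hX' hY'val hX'val hp'
    have hminpos : 0 < min ((P {ω | Y ω = 1}).toReal) ((P {ω | Y' ω = 1}).toReal) :=
      lt_min hq.1 hq'.1
    have hminle : min ((P {ω | Y ω = 1}).toReal) ((P {ω | Y' ω = 1}).toReal)
        ≤ (P {ω | Y ω = 1}).toReal := min_le_left _ _
    have hminle' : min ((P {ω | Y ω = 1}).toReal) ((P {ω | Y' ω = 1}).toReal)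
        ≤ (P {ω | Y' ω = 1}).toReal := min_le_right _ _
    set v0 : ℝ :=
      1 - min ((P {ω | Y ω = 1}).toReal) ((P {ω | Y' ω = 1}).toReal) / 2 with hv0def
    have hv0 : v0 ∈ Set.Ioo (0:ℝ) 1 := by
      rw [hv0def, Set.mem_Ioo]
      have := hq.2
      constructor <;> linarith
    have hnot : ¬ (v0 ≤ 1 - (P {ω | Y ω = 1}).toReal) := by
      rw [hv0def]; push_neg; linarith
    have hnot' : ¬ (v0 ≤ 1 - (P {ω | Y' ω = 1}).toReal) := by
      rw [hv0def]; push_neg; linarith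
    have key : ∀ ψ : ℝ → ℝ, ConvexOn ℝ Set.univ ψ →
        ψ (1 - (P {ω | Y ω = 0 ∧ X ω = 0}).toReal / (1 - (P {ω | X ω = 1}).toReal))
            * (1 - (P {ω | X ω = 1}).toReal)
          + ψ (1 - (P {ω | Y ω = 0 ∧ X ω = 1}).toReal / (P {ω | X ω = 1}).toReal)
            * (P {ω | X ω = 1}).toReal ≤
        ψ (1 - (P {ω | Y' ω = 0 ∧ X' ω = 0}).toReal / (1 - (P {ω | X' ω = 1}).toReal))
            * (1 - (P {ω | X' ω = 1}).toReal)
          + ψ (1 - (P {ω | Y' ω = 0 ∧ X' ω = 1}).toReal / (P {ω | X' ω = 1}).toReal)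
            * (P {ω | X' ω = 1}).toReal := by
      intro ψ hψ
      have h2 := hccx v0 hv0 ψ hψ
      rw [CCXPaper.bernoulli_repr P Y X hY hX hYval hXval hp hv0 ψ,
        CCXPaper.bernoulli_repr P Y' X' hY' hX' hY'val hX'val hp' hv0 ψ,
        if_neg hnot, if_neg hnot'] at h2
      exact h2
    obtain ⟨hmeaneq, hminba, hmaxab⟩ :=
      CCXPaper.cx_core_necessity hp.1 hp.2 hp'.1 hp'.2 key
    rw [hmean1, hmean2] at hmeaneq
    rw [CCXPaper.min_one_sub, CCXPaper.min_one_sub] at hminba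
    rw [CCXPaper.max_one_sub, CCXPaper.max_one_sub] at hmaxab
    exact ⟨hmeaneq, by linarith, by linarith⟩
  · -- sufficiency
    rintro ⟨hqq, hminh, hmaxh⟩ v hv φ hφ
    rw [CCXPaper.bernoulli_repr P Y X hY hX hYval hXval hp hv φ,
      CCXPaper.bernoulli_repr P Y' X' hY' hX' hY'val hX'val hp' hv φ, ← hqq]
    split_ifs with h
    · exact le_rfl
    · refine CCXPaper.two_point_cx hp.1.le hp.2.le hp'.1.le hp'.2.le ?_ ?_ ?_ hφ
      · rw [CCXPaper.bernoulli_mean P Y X hY hX hYval hXval hp,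
          CCXPaper.bernoulli_mean P Y' X' hY' hX' hY'val hX'val hp']
        exact hqq
      · rw [CCXPaper.min_one_sub, CCXPaper.min_one_sub]
        linarith
      · rw [CCXPaper.max_one_sub, CCXPaper.max_one_sub]
        linarith
end
end

section
/- Sufficient dimension reduction for the conditional convex order (Theorem, part (i)). Let g : ℝ^p → ℝ be measurable and sufficient for Y given X (i.e. Y and X are conditionally independent given g(X)), and let h : ℝ^{p'} → ℝ be measurable and sufficient for Y' given X' (i.e. Y' and X' are conditionally independent given h(X')). If (Y, g(X)) ⪯ccx (Y', h(X')), then (Y, X) ⪯ccx (Y', X'). -/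
open MeasureTheory ProbabilityTheory Set Filter

noncomputable section

namespace CCXPaper

variable {Ω Ω' : Type*} [MeasurableSpace Ω] [MeasurableSpace Ω']

theorem CxLE.congr_ae {P : Measure Ω} {P' : Measure Ω'} {S₁ S₂ : Ω → ℝ} {T₁ T₂ : Ω' → ℝ}
    (hS : S₁ =ᵐ[P] S₂) (hT : T₁ =ᵐ[P'] T₂) (h : CxLE P S₁ P' T₁) : CxLE P S₂ P' T₂ :=
  fun φ hφ => integral_congr_ae (hS.fun_comp φ) ▸ integral_congr_ae (hT.fun_comp φ) ▸ h φ hφ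

theorem CCX.of_condProbGE_ae_eq {β β' γ γ' : Type*} [MeasurableSpace β] [MeasurableSpace β']
    [MeasurableSpace γ] [MeasurableSpace γ'] {P : Measure Ω} {P' : Measure Ω'}
    {Y : Ω → ℝ} {Y' : Ω' → ℝ} {X : Ω → β} {Z : Ω → β'} {X' : Ω' → γ} {Z' : Ω' → γ'}
    (hXZ : ∀ y, condProbGE P Y X y =ᵐ[P] condProbGE P Y Z y)
    (hXZ' : ∀ y, condProbGE P' Y' X' y =ᵐ[P'] condProbGE P' Y' Z' y)
    (h : CCX P Y Z P' Y' Z') : CCX P Y X P' Y' X' :=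
  fun v hv => (h v hv).congr_ae (hXZ _).symm (hXZ' _).symm

end CCXPaper

open CCXPaper in
theorem ccx_sufficient_dimension_reduction_general
    {Ω : Type*} [MeasurableSpace Ω] (P : Measure Ω)
    {p p' : ℕ} (Y Y' : Ω → ℝ) (X : Ω → Fin p → ℝ) (X' : Ω → Fin p' → ℝ)
    (g : (Fin p → ℝ) → ℝ)
    (h : (Fin p' → ℝ) → ℝ)
    (hsuff : ∀ B : Set ℝ, MeasurableSet B →
      condProb P X (Y ⁻¹' B) =ᵐ[P] condProb P (fun ω => g (X ω)) (Y ⁻¹' B))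
    (hsuff' : ∀ B : Set ℝ, MeasurableSet B →
      condProb P X' (Y' ⁻¹' B) =ᵐ[P] condProb P (fun ω => h (X' ω)) (Y' ⁻¹' B))
    (hccx : CCX P Y (fun ω => g (X ω)) P Y' (fun ω => h (X' ω))) :
    CCX P Y X P Y' X' :=
  hccx.of_condProbGE_ae_eq (fun y => hsuff (Ici y) measurableSet_Ici)
    (fun y => hsuff' (Ici y) measurableSet_Ici)

open CCXPaper in
/-- Sufficient dimension reduction: if `g` is sufficient for `Y | X`
(i.e. `P(Y ∈ B | X) = P(Y ∈ B | g(X))` a.s. for every Borel `B`), and `h` is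
sufficient for `Y' | X'`, then `(Y, g(X)) ⪯ccx (Y', h(X'))` implies
`(Y, X) ⪯ccx (Y', X')`. -/
theorem ccx_sufficient_dimension_reduction
    {Ω : Type*} [MeasurableSpace Ω] (P : Measure Ω) [IsProbabilityMeasure P]
    (hPna : Nonatomic P)
    {p p' : ℕ} (Y Y' : Ω → ℝ) (X : Ω → Fin p → ℝ) (X' : Ω → Fin p' → ℝ)
    (hY : Measurable Y) (hX : Measurable X)
    (hY' : Measurable Y') (hX' : Measurable X')
    (g : (Fin p → ℝ) → ℝ) (hg : Measurable g)
    (h : (Fin p' → ℝ) → ℝ) (hh : Measurable h)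
    (hsuff : ∀ B : Set ℝ, MeasurableSet B →
      condProb P X (Y ⁻¹' B) =ᵐ[P] condProb P (fun ω => g (X ω)) (Y ⁻¹' B))
    (hsuff' : ∀ B : Set ℝ, MeasurableSet B →
      condProb P X' (Y' ⁻¹' B) =ᵐ[P] condProb P (fun ω => h (X' ω)) (Y' ⁻¹' B))
    (hccx : CCX P Y (fun ω => g (X ω)) P Y' (fun ω => h (X' ω))) :
    CCX P Y X P Y' X' :=
  ccx_sufficient_dimension_reduction_general P Y Y' X X' g h hsuff hsuff' hccx
end
end

section
/- Equivalent versions of the conditional convex order (Proposition). Let (Y,X) and (Y',X') be random vectors with Y, Y' real-valued. The following are equivalent: (i) (Y,X) ⪯ccx (Y',X'), i.e. P(Y ≥ q_Y(v) | X) ≤cx P(Y' ≥ q_{Y'}(v) | X') for all v ∈ (0,1); (ii) P(Y < q_Y(v) | X) ≤cx P(Y' < q_{Y'}(v) | X') for all v ∈ (0,1); (iii) P(Y ≤ q_Y(v) | X) ≤cx P(Y' ≤ q_{Y'}(v) | X') for Lebesgue-almost all v ∈ (0,1); (iv) P(Y > q_Y(v) | X) ≤cx P(Y' > q_{Y'}(v)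 | X') for Lebesgue-almost all v ∈ (0,1). -/
open MeasureTheory ProbabilityTheory Set Filter
open scoped ENNReal NNReal Topology

noncomputable section

namespace CCXProof

open CCXPaper

variable {Ω : Type*} [MeasurableSpace Ω] (P : Measure Ω) [IsProbabilityMeasure P]
  (Z : Ω → ℝ)

/-- left value: P(Z < q v) -/
def aa (v : ℝ) : ℝ := (P {ω | Z ω < quantRV P Z v}).toReal

/-- right value: P(Z ≤ q v) -/
def bb (v : ℝ) : ℝ := (P {ω | Z ω ≤ quantRV P Z v}).toReal

variable {P Z}

lemma cdf_mono (hZ : Measurable Z) : Monotone (cdfRV P Z) := by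
  intro y z hyz
  exact ENNReal.toReal_mono (measure_ne_top _ _)
    (measure_mono (fun ω hω => le_trans hω hyz))

lemma cdf_nonneg (y : ℝ) : 0 ≤ cdfRV P Z y := ENNReal.toReal_nonneg

lemma cdf_le_one (y : ℝ) : cdfRV P Z y ≤ 1 := by
  unfold cdfRV
  rw [show (1:ℝ) = (P univ).toReal by simp]
  exact ENNReal.toReal_mono (measure_ne_top _ _) (measure_mono (subset_univ _))

lemma quant_set_nonempty {v : ℝ} (hv : v < 1) :
    {y : ℝ | v ≤ cdfRV P Z y}.Nonempty := by
  rcases le_or_gt v 0 with h0 | h0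
  · exact ⟨0, le_trans h0 (cdf_nonneg 0)⟩
  have hU : (⋃ n : ℕ, {ω | Z ω ≤ (n:ℝ)}) = univ := by
    ext ω; simp only [mem_iUnion, mem_setOf_eq, mem_univ, iff_true]
    exact exists_nat_ge (Z ω)
  have hmono : Monotone (fun n : ℕ => {ω | Z ω ≤ (n:ℝ)}) := by
    intro n m hnm ω hω
    simp only [mem_setOf_eq] at hω ⊢
    exact hω.trans (Nat.cast_le.mpr hnm)
  have h1 : (1:ℝ≥0∞) = ⨆ n : ℕ, P {ω | Z ω ≤ (n:ℝ)} := by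
    rw [← hmono.measure_iUnion, hU, measure_univ]
  have hvlt : ENNReal.ofReal v < 1 := by
    rw [show (1:ℝ≥0∞) = ENNReal.ofReal 1 by simp]
    exact (ENNReal.ofReal_lt_ofReal_iff_of_nonneg h0.le).mpr hv
  rw [h1] at hvlt
  obtain ⟨n, hn⟩ := lt_iSup_iff.mp hvlt
  exact ⟨(n:ℝ), (ENNReal.ofReal_le_iff_le_toReal (measure_ne_top _ _)).mp hn.le⟩

lemma quant_set_bddBelow (hZ : Measurable Z) {v : ℝ} (hv : 0 < v) :
    BddBelow {y : ℝ | v ≤ cdfRV P Z y} := by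
  have hI : (⋂ n : ℕ, {ω | Z ω ≤ -(n:ℝ)}) = ∅ := by
    ext ω; simp only [mem_iInter, mem_setOf_eq, mem_empty_iff_false, iff_false, not_forall]
    obtain ⟨n, hn⟩ := exists_nat_gt (-(Z ω))
    exact ⟨n, by push_neg; linarith⟩
  have hanti : Antitone (fun n : ℕ => {ω | Z ω ≤ -(n:ℝ)}) := by
    intro n m hnm ω hω
    simp only [mem_setOf_eq] at hω ⊢
    refine hω.trans (neg_le_neg (by exact_mod_cast hnm))
  have h0 : (⨅ n : ℕ, P {ω | Z ω ≤ -(n:ℝ)}) = 0 := by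
    rw [← hanti.measure_iInter (fun n => (hZ measurableSet_Iic).nullMeasurableSet)
      ⟨0, measure_ne_top _ _⟩, hI, measure_empty]
  have hlt : (⨅ n : ℕ, P {ω | Z ω ≤ -(n:ℝ)}) < ENNReal.ofReal v := by
    rw [h0]; exact ENNReal.ofReal_pos.mpr hv
  obtain ⟨n, hn⟩ := iInf_lt_iff.mp hlt
  refine ⟨-(n:ℝ), fun y hy => ?_⟩
  by_contra hlt2
  push_neg at hlt2
  have : cdfRV P Z y ≤ cdfRV P Z (-(n:ℝ)) := cdf_mono hZ hlt2.le
  have h2 : cdfRV P Z (-(n:ℝ)) < v :=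
    (ENNReal.lt_ofReal_iff_toReal_lt (measure_ne_top _ _)).mp hn
  exact absurd hy (by simp only [mem_setOf_eq]; linarith)

variable (P Z) in
lemma aa_nonneg (v : ℝ) : 0 ≤ aa P Z v := ENNReal.toReal_nonneg

variable (P Z) in
lemma bb_le_one (v : ℝ) : bb P Z v ≤ 1 := by
  unfold bb
  rw [show (1:ℝ) = (P univ).toReal by simp]
  exact ENNReal.toReal_mono (measure_ne_top _ _) (measure_mono (subset_univ _))

lemma bb_eq_cdf_quant (v : ℝ) : bb P Z v = cdfRV P Z (quantRV P Z v) := rfl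

/-- L3 : v ≤ bb v for v ∈ (0,1). -/
lemma le_bb (hZ : Measurable Z) {v : ℝ} (hv : v ∈ Ioo (0:ℝ) 1) : v ≤ bb P Z v := by
  set q := quantRV P Z v with hq
  have hne := quant_set_nonempty (P := P) (Z := Z) hv.2
  have hbdd := quant_set_bddBelow hZ (P := P) hv.1
  have hI : {ω | Z ω ≤ q} = ⋂ n : ℕ, {ω | Z ω ≤ q + 1/((n:ℝ)+1)} := by
    ext ω
    simp only [mem_setOf_eq, mem_iInter]
    constructor
    · intro h n; have : (0:ℝ) < 1/((n:ℝ)+1) := by positivity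
      linarith
    · intro h
      by_contra hc; push_neg at hc
      obtain ⟨n, hn⟩ := exists_nat_one_div_lt (show (0:ℝ) < Z ω - q by linarith)
      have := h n; linarith
  have hanti : Antitone (fun n : ℕ => {ω | Z ω ≤ q + 1/((n:ℝ)+1)}) := by
    intro n m hnm ω hω
    simp only [mem_setOf_eq] at hω ⊢
    have : 1/((m:ℝ)+1) ≤ 1/((n:ℝ)+1) := by
      apply one_div_le_one_div_of_le (by positivity)
      have : (n:ℝ) ≤ m := Nat.cast_le.mpr hnm; linarith
    linarith
  have hkey : ∀ n : ℕ, ENNReal.ofReal v ≤ P {ω | Z ω ≤ q + 1/((n:ℝ)+1)} := by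
    intro n
    have hpos : (0:ℝ) < 1/((n:ℝ)+1) := by positivity
    obtain ⟨y, hy, hylt⟩ := (csInf_lt_iff hbdd hne).mp
      (show sInf {y : ℝ | v ≤ cdfRV P Z y} < q + 1/((n:ℝ)+1) by
        have : sInf {y : ℝ | v ≤ cdfRV P Z y} = q := hq.symm ▸ rfl
        linarith)
    calc ENNReal.ofReal v ≤ P {ω | Z ω ≤ y} :=
          (ENNReal.ofReal_le_iff_le_toReal (measure_ne_top _ _)).mpr hy
      _ ≤ _ := measure_mono (fun ω hω => le_trans hω hylt.le)
  have : ENNReal.ofReal v ≤ P {ω | Z ω ≤ q} := by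
    rw [hI, hanti.measure_iInter (fun n => (hZ measurableSet_Iic).nullMeasurableSet)
      ⟨0, measure_ne_top _ _⟩]
    exact le_iInf hkey
  exact (ENNReal.ofReal_le_iff_le_toReal (measure_ne_top _ _)).mp this

/-- L5 : z < q v → cdf z < v (for 0 < v). -/
lemma cdf_lt_of_lt_quant (hZ : Measurable Z) {v z : ℝ} (hv : 0 < v)
    (hz : z < quantRV P Z v) : cdfRV P Z z < v := by
  by_contra h
  push_neg at h
  exact absurd (csInf_le (quant_set_bddBelow hZ hv) h) (not_le.mpr hz)

/-- L6 : aa v ≤ v (for 0 < v), plus union representation. -/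
lemma aa_le (hZ : Measurable Z) {v : ℝ} (hv : 0 < v) : aa P Z v ≤ v := by
  set q := quantRV P Z v with hq
  have hU : {ω | Z ω < q} = ⋃ n : ℕ, {ω | Z ω ≤ q - 1/((n:ℝ)+1)} := by
    ext ω
    simp only [mem_setOf_eq, mem_iUnion]
    constructor
    · intro h
      obtain ⟨n, hn⟩ := exists_nat_one_div_lt (show (0:ℝ) < q - Z ω by linarith)
      exact ⟨n, by linarith⟩
    · rintro ⟨n, hn⟩
      have : (0:ℝ) < 1/((n:ℝ)+1) := by positivity
      linarith
  have hmono : Monotone (fun n : ℕ => {ω | Z ω ≤ q - 1/((n:ℝ)+1)}) := by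
    intro n m hnm ω hω
    simp only [mem_setOf_eq] at hω ⊢
    have : 1/((m:ℝ)+1) ≤ 1/((n:ℝ)+1) := by
      apply one_div_le_one_div_of_le (by positivity)
      have : (n:ℝ) ≤ m := Nat.cast_le.mpr hnm; linarith
    linarith
  have hkey : ∀ n : ℕ, P {ω | Z ω ≤ q - 1/((n:ℝ)+1)} ≤ ENNReal.ofReal v := by
    intro n
    have hpos : (0:ℝ) < 1/((n:ℝ)+1) := by positivity
    have := cdf_lt_of_lt_quant hZ hv (z := q - 1/((n:ℝ)+1)) (by rw [← hq]; linarith)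
    calc P {ω | Z ω ≤ q - 1/((n:ℝ)+1)}
        = ENNReal.ofReal (cdfRV P Z (q - 1/((n:ℝ)+1))) := by
          rw [cdfRV, ENNReal.ofReal_toReal (measure_ne_top _ _)]
      _ ≤ ENNReal.ofReal v := ENNReal.ofReal_le_ofReal this.le
  have : P {ω | Z ω < q} ≤ ENNReal.ofReal v := by
    rw [hU, hmono.measure_iUnion]
    exact iSup_le hkey
  calc aa P Z v ≤ (ENNReal.ofReal v).toReal := ENNReal.toReal_mono ENNReal.ofReal_ne_top this
    _ = v := ENNReal.toReal_ofReal hv.le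

/-- q v ≤ y whenever v ≤ cdf y. -/
lemma quant_le (hZ : Measurable Z) {v y : ℝ} (hv : 0 < v) (hy : v ≤ cdfRV P Z y) :
    quantRV P Z v ≤ y := csInf_le (quant_set_bddBelow hZ hv) hy

/-- L7 : w < aa v → q w < q v and {Z ≤ q w} ⊆ {Z < q v}. -/
lemma quant_lt_of_lt_aa (hZ : Measurable Z) {v w : ℝ} (hw : 0 < w)
    (hwv : w < aa P Z v) :
    quantRV P Z w < quantRV P Z v ∧
      {ω | Z ω ≤ quantRV P Z w} ⊆ {ω | Z ω < quantRV P Z v} := by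
  set q := quantRV P Z v
  -- ∃ z < q with w ≤ cdf z
  have hU : {ω | Z ω < q} = ⋃ n : ℕ, {ω | Z ω ≤ q - 1/((n:ℝ)+1)} := by
    ext ω
    simp only [mem_setOf_eq, mem_iUnion]
    constructor
    · intro h
      obtain ⟨n, hn⟩ := exists_nat_one_div_lt (show (0:ℝ) < q - Z ω by linarith)
      exact ⟨n, by linarith⟩
    · rintro ⟨n, hn⟩
      have : (0:ℝ) < 1/((n:ℝ)+1) := by positivity
      linarith
  have hmono : Monotone (fun n : ℕ => {ω | Z ω ≤ q - 1/((n:ℝ)+1)}) := by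
    intro n m hnm ω hω
    simp only [mem_setOf_eq] at hω ⊢
    have : 1/((m:ℝ)+1) ≤ 1/((n:ℝ)+1) := by
      apply one_div_le_one_div_of_le (by positivity)
      have : (n:ℝ) ≤ m := Nat.cast_le.mpr hnm; linarith
    linarith
  have hofw : ENNReal.ofReal w < P {ω | Z ω < q} := by
    have : ENNReal.ofReal w < ENNReal.ofReal (aa P Z v) :=
      (ENNReal.ofReal_lt_ofReal_iff_of_nonneg hw.le).mpr hwv
    rwa [aa, ENNReal.ofReal_toReal (measure_ne_top _ _)] at this
  rw [hU, hmono.measure_iUnion, lt_iSup_iff] at hofw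
  obtain ⟨n, hn⟩ := hofw
  have hcdf : w ≤ cdfRV P Z (q - 1/((n:ℝ)+1)) :=
    (ENNReal.ofReal_le_iff_le_toReal (measure_ne_top _ _)).mp hn.le
  have hq : quantRV P Z w ≤ q - 1/((n:ℝ)+1) := quant_le hZ hw hcdf
  have hpos : (0:ℝ) < 1/((n:ℝ)+1) := by positivity
  constructor
  · linarith
  · intro ω hω
    simp only [mem_setOf_eq] at hω ⊢
    linarith

/-- L8 : aa v < w ≤ bb v → q w = q v. -/
lemma quant_eq_of_mem (hZ : Measurable Z) {v w : ℝ} (hva : aa P Z v < w)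
    (hwb : w ≤ bb P Z v) : quantRV P Z w = quantRV P Z v := by
  have hw : 0 < w := lt_of_le_of_lt (aa_nonneg P Z v) hva
  have hle : quantRV P Z w ≤ quantRV P Z v := quant_le hZ hw hwb
  have hge : quantRV P Z v ≤ quantRV P Z w := by
    have hmem : quantRV P Z v ∈ {y : ℝ | w ≤ cdfRV P Z y} := hwb
    apply le_csInf ⟨_, hmem⟩
    intro y hy
    by_contra hc
    push_neg at hc
    have hsub : {ω | Z ω ≤ y} ⊆ {ω | Z ω < quantRV P Z v} :=
      fun ω hω => lt_of_le_of_lt hω hc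
    have : cdfRV P Z y ≤ aa P Z v :=
      ENNReal.toReal_mono (measure_ne_top _ _) (measure_mono hsub)
    have hy' : w ≤ cdfRV P Z y := hy
    linarith
  linarith

/-- L9 : bb v < w, w < 1 → q v < q w, and {Z ≤ q v} ⊆ {Z < q w}. -/
lemma quant_lt_of_bb_lt (hZ : Measurable Z) {v w : ℝ} (hvb : bb P Z v < w)
    (hw1 : w ∈ Ioo (0:ℝ) 1) :
    quantRV P Z v < quantRV P Z w ∧
      {ω | Z ω ≤ quantRV P Z v} ⊆ {ω | Z ω < quantRV P Z w} := by
  have h1 : w ≤ bb P Z w := le_bb hZ hw1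
  have hlt : quantRV P Z v < quantRV P Z w := by
    by_contra h
    push_neg at h
    have : bb P Z w ≤ bb P Z v := by
      unfold bb
      exact ENNReal.toReal_mono (measure_ne_top _ _)
        (measure_mono (fun ω hω => le_trans hω h))
    linarith
  exact ⟨hlt, fun ω hω => lt_of_le_of_lt hω hlt⟩

/-- aa w ≥ bb v when q v < q w i.e. subset version: monotonicity of measure. -/
lemma bb_le_aa_of_subset {v w : ℝ}
    (h : {ω | Z ω ≤ quantRV P Z v} ⊆ {ω | Z ω < quantRV P Z w}) :
    bb P Z v ≤ aa P Z w :=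
  ENNReal.toReal_mono (measure_ne_top _ _) (measure_mono h)

lemma aa_le_bb (v : ℝ) : aa P Z v ≤ bb P Z v :=
  ENNReal.toReal_mono (measure_ne_top _ _) (measure_mono (setOf_subset_setOf.mpr (fun ω h => le_of_lt h)))

lemma aa_eq_of_quant_eq {v w : ℝ} (h : quantRV P Z w = quantRV P Z v) :
    aa P Z w = aa P Z v := by unfold aa; rw [h]

lemma bb_eq_of_quant_eq {v w : ℝ} (h : quantRV P Z w = quantRV P Z v) :
    bb P Z w = bb P Z v := by unfold bb; rw [h]

section CondExp

variable {β : Type*} [MeasurableSpace β] {X : Ω → β}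

lemma comap_le (hX : Measurable X) :
    MeasurableSpace.comap X inferInstance ≤ (inferInstance : MeasurableSpace Ω) := by
  rintro s ⟨t, ht, rfl⟩
  exact hX ht

lemma indicator_one_integrable {s : Set Ω} (hs : MeasurableSet s) :
    Integrable (s.indicator (fun _ => (1:ℝ))) P :=
  (integrable_const (1:ℝ)).indicator hs

lemma condProb_nonneg (s : Set Ω) : 0 ≤ᵐ[P] condProb P X s :=
  condExp_nonneg (Eventually.of_forall (fun ω => Set.indicator_nonneg (fun _ _ => zero_le_one) ω))

lemma condProb_le_one (hX : Measurable X) {s : Set Ω} (hs : MeasurableSet s) :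
    condProb P X s ≤ᵐ[P] fun _ => (1:ℝ) := by
  have h := condExp_mono (μ := P) (m := MeasurableSpace.comap X inferInstance)
    (indicator_one_integrable hs) (integrable_const (1:ℝ))
    (Eventually.of_forall (fun ω => Set.indicator_le_self' (fun _ _ => zero_le_one) ω))
  calc condProb P X s ≤ᵐ[P] P[(fun _ => (1:ℝ)) | _] := h
    _ =ᵐ[P] fun _ => (1:ℝ) := by rw [condExp_const (comap_le hX) (1:ℝ)]

lemma condProb_integral (hX : Measurable X) {s : Set Ω} (hs : MeasurableSet s) :
    ∫ ω, condProb P X s ω ∂P = (P s).toReal := by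
  haveI : SigmaFinite (P.trim (comap_le hX)) := by
    apply sigmaFiniteTrim_mono _ le_rfl
  rw [condProb, integral_condExp (comap_le hX), integral_indicator_const (1:ℝ) hs]
  simp [measureReal_def]

lemma condProb_congr {s t : Set Ω} (h : s =ᵐ[P] t) :
    condProb P X s =ᵐ[P] condProb P X t := by
  exact condExp_congr_ae (indicator_ae_eq_of_ae_eq_set h)

lemma condProb_compl (hX : Measurable X) {s : Set Ω} (hs : MeasurableSet s) :
    condProb P X sᶜ =ᵐ[P] fun ω => 1 - condProb P X s ω := by
  have hind : sᶜ.indicator (fun _ => (1:ℝ)) =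
      (fun _ => (1:ℝ)) - s.indicator (fun _ => (1:ℝ)) := by
    funext ω
    by_cases h : ω ∈ s <;> simp [Set.indicator_apply, h]
  rw [condProb, hind]
  calc P[(fun _ => (1:ℝ)) - s.indicator (fun _ => (1:ℝ)) | MeasurableSpace.comap X inferInstance]
      =ᵐ[P] P[(fun _ => (1:ℝ)) | MeasurableSpace.comap X inferInstance]
        - P[s.indicator (fun _ => (1:ℝ)) | MeasurableSpace.comap X inferInstance] :=
        condExp_sub (integrable_const 1) (indicator_one_integrable hs) _
    _ =ᵐ[P] fun ω => 1 - condProb P X s ω := by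
        rw [condExp_const (comap_le hX) (1:ℝ)]
        exact Eventually.of_forall (fun ω => rfl)

end CondExp

section CxLEBasic

variable {β γ : Type*} [MeasurableSpace β] [MeasurableSpace γ]

lemma convexOn_neg_id : ConvexOn ℝ univ (fun x : ℝ => -x) := by
  refine ⟨convex_univ, fun x _ y _ a b ha hb hab => ?_⟩
  simp only [smul_eq_mul]
  ring_nf
  exact le_of_eq (by ring)

lemma cxle_mean {S T : Ω → ℝ} (h : CxLE P S P T) :
    ∫ ω, S ω ∂P = ∫ ω, T ω ∂P := by
  have h1 := h id (convexOn_id convex_univ)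
  have h2 := h (fun x => -x) convexOn_neg_id
  simp only [id] at h1
  rw [integral_neg, integral_neg, neg_le_neg_iff] at h2
  exact le_antisymm h1 h2

lemma cxle_congr {S S' T T' : Ω → ℝ} (hS : S =ᵐ[P] S') (hT : T =ᵐ[P] T')
    (h : CxLE P S P T) : CxLE P S' P T' := by
  intro φ hφ
  have e1 : ∫ ω, φ (S' ω) ∂P = ∫ ω, φ (S ω) ∂P :=
    integral_congr_ae (by filter_upwards [hS] with ω hω; rw [hω])
  have e2 : ∫ ω, φ (T' ω) ∂P = ∫ ω, φ (T ω) ∂P :=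
    integral_congr_ae (by filter_upwards [hT] with ω hω; rw [hω])
  rw [e1, e2]
  exact h φ hφ

lemma cxle_of_ae_eq {S T : Ω → ℝ} (h : S =ᵐ[P] T) : CxLE P S P T :=
  fun φ _ => le_of_eq (integral_congr_ae (h.fun_comp φ))

lemma convexOn_comp_one_sub {φ : ℝ → ℝ} (hφ : ConvexOn ℝ univ φ) :
    ConvexOn ℝ univ (fun x => φ (1 - x)) := by
  refine ⟨convex_univ, fun x _ y _ a b ha hb hab => ?_⟩
  show φ (1 - (a • x + b • y)) ≤ a • φ (1 - x) + b • φ (1 - y)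
  have h1 : 1 - (a • x + b • y) = a • (1 - x) + b • (1 - y) := by
    simp only [smul_eq_mul]; nlinarith [hab]
  rw [h1]
  exact hφ.2 (mem_univ _) (mem_univ _) ha hb hab

lemma cxle_one_sub {S T : Ω → ℝ} (h : CxLE P S P T) :
    CxLE P (fun ω => 1 - S ω) P (fun ω => 1 - T ω) := by
  intro φ hφ
  exact h (fun x => φ (1 - x)) (convexOn_comp_one_sub hφ)

lemma cxle_one_sub_iff {S T : Ω → ℝ} :
    CxLE P (fun ω => 1 - S ω) P (fun ω => 1 - T ω) ↔ CxLE P S P T := by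
  constructor
  · intro h
    have h2 := cxle_one_sub h
    simp only [sub_sub_cancel] at h2
    exact h2
  · exact cxle_one_sub

end CxLEBasic

section Lip

/-- A convex function on ℝ is Lipschitz on [0,1]. -/
lemma convex_lipschitz_on_unit {φ : ℝ → ℝ} (hφ : ConvexOn ℝ univ φ) :
    ∃ K : ℝ, 0 ≤ K ∧ ∀ x ∈ Icc (0:ℝ) 1, ∀ y ∈ Icc (0:ℝ) 1, |φ x - φ y| ≤ K * |x - y| := by
  have hball : ConvexOn ℝ (Metric.ball (0:ℝ) 4) φ := hφ.subset (subset_univ _) (convex_ball _ _)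
  have hcont : ContinuousOn φ (Metric.ball (0:ℝ) 4) :=
    (hball.continuousOn Metric.isOpen_ball)
  have hbdd : Bornology.IsBounded (φ '' Metric.ball (0:ℝ) 4) := by
    have hsub : Metric.ball (0:ℝ) 4 ⊆ Metric.closedBall (0:ℝ) 4 := Metric.ball_subset_closedBall
    have hcont2 : ContinuousOn φ (Metric.closedBall (0:ℝ) 5) := by
      have h6 : ConvexOn ℝ (Metric.ball (0:ℝ) 6) φ := hφ.subset (subset_univ _) (convex_ball _ _)
      refine (h6.continuousOn Metric.isOpen_ball).mono ?_
      intro x hx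
      simp only [Metric.mem_closedBall, Metric.mem_ball, Real.dist_eq] at hx ⊢
      linarith
    have hcomp : IsCompact (Metric.closedBall (0:ℝ) 5) := isCompact_closedBall _ _
    have := (hcomp.image_of_continuousOn hcont2).isBounded
    apply this.subset
    apply image_mono
    intro x hx
    simp only [Metric.mem_closedBall, Metric.mem_ball, Real.dist_eq] at hx ⊢
    linarith
  obtain ⟨K, hK⟩ := hball.exists_lipschitzOnWith_of_isBounded (show (2:ℝ) < 4 by norm_num) hbdd
  refine ⟨K, K.coe_nonneg, fun x hx y hy => ?_⟩
  have hxb : x ∈ Metric.ball (0:ℝ) 2 := by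
    simp only [Metric.mem_ball, Real.dist_eq, sub_zero]
    rw [abs_of_nonneg hx.1]; linarith [hx.2]
  have hyb : y ∈ Metric.ball (0:ℝ) 2 := by
    simp only [Metric.mem_ball, Real.dist_eq, sub_zero]
    rw [abs_of_nonneg hy.1]; linarith [hy.2]
  have := hK.dist_le_mul x hxb y hyb
  simpa [Real.dist_eq] using this

end Lip

section Lim

variable {β : Type*} [MeasurableSpace β] {X : Ω → β}

lemma convex_continuous {φ : ℝ → ℝ} (hφ : ConvexOn ℝ univ φ) : Continuous φ := by
  rw [← continuousOn_univ]
  simpa using hφ.continuousOn (isOpen_univ)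

lemma phi_comp_integrable {φ : ℝ → ℝ} (hφ : ConvexOn ℝ univ φ) {G : Ω → ℝ}
    (hG : AEStronglyMeasurable G P) (h0 : 0 ≤ᵐ[P] G) (h1 : G ≤ᵐ[P] fun _ => (1:ℝ)) :
    Integrable (fun ω => φ (G ω)) P := by
  obtain ⟨C, hC⟩ := (isCompact_Icc (a := (0:ℝ)) (b := 1)).exists_bound_of_continuousOn
    (convex_continuous hφ).continuousOn
  refine Integrable.mono' (integrable_const C) ((convex_continuous hφ).comp_aestronglyMeasurable hG) ?_
  filter_upwards [h0, h1] with ω hω0 hω1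
  exact hC (G ω) ⟨hω0, hω1⟩

/-- Convergence of ∫ φ ∘ condProb along approximating sets. -/
lemma tendsto_integral_phi_condProb (hX : Measurable X) {φ : ℝ → ℝ}
    (hφ : ConvexOn ℝ univ φ)
    {s : Set Ω} (hs : MeasurableSet s) {u : ℕ → Set Ω} (hu : ∀ n, MeasurableSet (u n))
    (hsub : (∀ n, u n ⊆ s) ∨ (∀ n, s ⊆ u n))
    (hconv : Tendsto (fun n => (P (u n)).toReal) atTop (𝓝 ((P s).toReal))) :
    Tendsto (fun n => ∫ ω, φ (condProb P X (u n) ω) ∂P) atTop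
      (𝓝 (∫ ω, φ (condProb P X s ω) ∂P)) := by
  obtain ⟨K, hK0, hK⟩ := convex_lipschitz_on_unit hφ
  have hGs : AEStronglyMeasurable (condProb P X s) P := integrable_condExp.aestronglyMeasurable
  have hGu : ∀ n, AEStronglyMeasurable (condProb P X (u n)) P :=
    fun n => integrable_condExp.aestronglyMeasurable
  -- key bound
  have hbound : ∀ n, |∫ ω, φ (condProb P X (u n) ω) ∂P - ∫ ω, φ (condProb P X s ω) ∂P|
      ≤ K * |(P (u n)).toReal - (P s).toReal| := by
    intro n
    have hint_u : Integrable (fun ω => φ (condProb P X (u n) ω)) P :=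
      phi_comp_integrable hφ (hGu n) (condProb_nonneg _) (condProb_le_one hX (hu n))
    have hint_s : Integrable (fun ω => φ (condProb P X s ω)) P :=
      phi_comp_integrable hφ hGs (condProb_nonneg _) (condProb_le_one hX hs)
    rw [← integral_sub hint_u hint_s]
    have step1 : |∫ ω, (φ (condProb P X (u n) ω) - φ (condProb P X s ω)) ∂P|
        ≤ ∫ ω, |φ (condProb P X (u n) ω) - φ (condProb P X s ω)| ∂P := by
      simpa [Real.norm_eq_abs] using
        norm_integral_le_integral_norm (fun ω => φ (condProb P X (u n) ω) - φ (condProb P X s ω))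
    refine step1.trans ?_
    -- pointwise Lipschitz bound
    have hmono_sub : ∀ᵐ ω ∂P, |φ (condProb P X (u n) ω) - φ (condProb P X s ω)|
        ≤ K * |condProb P X (u n) ω - condProb P X s ω| := by
      filter_upwards [condProb_nonneg (P := P) (X := X) (u n), condProb_le_one hX (hu n),
        condProb_nonneg (P := P) (X := X) s, condProb_le_one hX hs] with ω h1 h2 h3 h4
      exact hK _ ⟨h1, h2⟩ _ ⟨h3, h4⟩
    have hint_abs : Integrable (fun ω => |φ (condProb P X (u n) ω) - φ (condProb P X s ω)|) P :=
      (hint_u.sub hint_s).abs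
    have hIu : Integrable (condProb P X (u n)) P := integrable_condExp
    have hIs : Integrable (condProb P X s) P := integrable_condExp
    have hint_Kabs : Integrable (fun ω => K * |condProb P X (u n) ω - condProb P X s ω|) P :=
      ((hIu.sub hIs).abs.const_mul K)
    have step2 : ∫ ω, |φ (condProb P X (u n) ω) - φ (condProb P X s ω)| ∂P
        ≤ ∫ ω, K * |condProb P X (u n) ω - condProb P X s ω| ∂P :=
      integral_mono_ae hint_abs hint_Kabs hmono_sub
    refine step2.trans ?_
    rw [integral_const_mul]
    -- ∫ |G_n - G| = |∫ G_n - ∫ G| using one-sided domination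
    have hIu : Integrable (condProb P X (u n)) P := integrable_condExp
    have hIs : Integrable (condProb P X s) P := integrable_condExp
    have key : ∫ ω, |condProb P X (u n) ω - condProb P X s ω| ∂P
        = |(P (u n)).toReal - (P s).toReal| := by
      rcases hsub with hsub | hsub
      · -- u n ⊆ s : condProb u n ≤ condProb s a.e.
        have hle : condProb P X (u n) ≤ᵐ[P] condProb P X s := by
          apply condExp_mono (indicator_one_integrable (hu n)) (indicator_one_integrable hs)
          exact Eventually.of_forall (Set.indicator_le_indicator_of_subset (hsub n)
            (fun _ => zero_le_one))
        have habs : (fun ω => |condProb P X (u n) ω - condProb P X s ω|)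
            =ᵐ[P] fun ω => condProb P X s ω - condProb P X (u n) ω := by
          filter_upwards [hle] with ω hω
          rw [abs_sub_comm, abs_of_nonneg (by linarith)]
        rw [integral_congr_ae habs, integral_sub hIs hIu,
          condProb_integral hX hs, condProb_integral hX (hu n)]
        have hPle : (P (u n)).toReal ≤ (P s).toReal :=
          ENNReal.toReal_mono (measure_ne_top _ _) (measure_mono (hsub n))
        rw [abs_sub_comm, abs_of_nonneg (by linarith)]
      · have hle : condProb P X s ≤ᵐ[P] condProb P X (u n) := by
          apply condExp_mono (indicator_one_integrable hs) (indicator_one_integrable (hu n))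
          exact Eventually.of_forall (Set.indicator_le_indicator_of_subset (hsub n)
            (fun _ => zero_le_one))
        have habs : (fun ω => |condProb P X (u n) ω - condProb P X s ω|)
            =ᵐ[P] fun ω => condProb P X (u n) ω - condProb P X s ω := by
          filter_upwards [hle] with ω hω
          rw [abs_of_nonneg (by linarith)]
        rw [integral_congr_ae habs, integral_sub hIu hIs,
          condProb_integral hX hs, condProb_integral hX (hu n)]
        have hPle : (P s).toReal ≤ (P (u n)).toReal :=
          ENNReal.toReal_mono (measure_ne_top _ _) (measure_mono (hsub n))
        rw [abs_of_nonneg (by linarith)]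
    rw [key]
  -- conclude by squeeze
  have htend0 : Tendsto (fun n => K * |(P (u n)).toReal - (P s).toReal|) atTop (𝓝 0) := by
    have : Tendsto (fun n => (P (u n)).toReal - (P s).toReal) atTop (𝓝 0) := by
      simpa using hconv.sub (tendsto_const_nhds (x := (P s).toReal) (f := atTop))
    have habs : Tendsto (fun n => |(P (u n)).toReal - (P s).toReal|) atTop (𝓝 0) := by
      simpa using this.abs
    simpa using habs.const_mul K
  rw [tendsto_iff_dist_tendsto_zero]
  apply squeeze_zero (fun n => dist_nonneg) _ htend0
  intro n
  rw [Real.dist_eq]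
  exact hbound n

end Lim

section Main

variable {β γ : Type*} [MeasurableSpace β] [MeasurableSpace γ] {X : Ω → β} {X' : Ω → γ}

/-- monotonicity of the quantile function -/
lemma quant_mono (hZ : Measurable Z) {v w : ℝ} (hv : 0 < v) (hvw : v ≤ w) (hw : w < 1) :
    quantRV P Z v ≤ quantRV P Z w :=
  csInf_le_csInf (quant_set_bddBelow hZ hv) (quant_set_nonempty hw)
    (fun y hy => le_trans hvw hy)

lemma quant_const_of_aa_const (hZ : Measurable Z) {c x1 x2 : ℝ}
    (hx1 : x1 ∈ Ioo (0:ℝ) 1) (hx2 : x2 ∈ Ioo (0:ℝ) 1)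
    (h1 : c < x1) (h2 : c < x2) (ha1 : aa P Z x1 = c) (ha2 : aa P Z x2 = c) :
    quantRV P Z x1 = quantRV P Z x2 := by
  have key : ∀ y1 y2 : ℝ, y1 ∈ Ioo (0:ℝ) 1 → y2 ∈ Ioo (0:ℝ) 1 → y1 < y2 → c < y1 →
      aa P Z y2 = c → quantRV P Z y1 = quantRV P Z y2 := by
    intro y1 y2 hy1 hy2 hlt hc1 hac2
    have hle := quant_mono (P := P) hZ hy1.1 hlt.le hy2.2
    rcases eq_or_lt_of_le hle with heq | hstrict
    · exact heq
    · exfalso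
      have hsub : {ω | Z ω ≤ quantRV P Z y1} ⊆ {ω | Z ω < quantRV P Z y2} :=
        fun ω hω => lt_of_le_of_lt hω hstrict
      have hbb : bb P Z y1 ≤ aa P Z y2 := bb_le_aa_of_subset hsub
      have := le_bb (P := P) hZ hy1
      rw [hac2] at hbb
      linarith
  rcases lt_trichotomy x1 x2 with h | h | h
  · exact key x1 x2 hx1 hx2 h h1 ha2
  · rw [h]
  · exact (key x2 x1 hx2 hx1 h h2 ha1).symm

/-- extract a point of an a.e. (w.r.t. unif01) set within a subinterval -/
lemma exists_good {Q : ℝ → Prop} (hae : ∀ᵐ v ∂unif01, Q v) {c d : ℝ}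
    (hc : 0 ≤ c) (hcd : c < d) (hd : d ≤ 1) :
    ∃ w, w ∈ Ioo c d ∧ Q w := by
  have hN : unif01 {v | ¬ Q v} = 0 := by
    rw [ae_iff] at hae; exact hae
  have hNv : volume ({v | ¬ Q v} ∩ Ioo (0:ℝ) 1) = 0 := by
    rw [unif01, Measure.restrict_apply' measurableSet_Ioo] at hN
    exact hN
  have hsub : Ioo c d ∩ {v | ¬ Q v} ⊆ {v | ¬ Q v} ∩ Ioo (0:ℝ) 1 := by
    intro x hx
    exact ⟨hx.2, lt_of_le_of_lt hc hx.1.1, lt_of_lt_of_le hx.1.2 hd⟩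
  have h0 : volume (Ioo c d ∩ {v | ¬ Q v}) = 0 :=
    measure_mono_null hsub hNv
  have hpos : volume (Ioo c d \ {v | ¬ Q v}) ≠ 0 := by
    intro hz
    have : volume (Ioo c d) = 0 := by
      have := measure_union_le (μ := volume) (Ioo c d ∩ {v | ¬ Q v}) (Ioo c d \ {v | ¬ Q v})
      rw [Set.inter_union_diff] at this
      rw [h0, hz] at this
      simpa using this
    rw [Real.volume_Ioo] at this
    simp only [ENNReal.ofReal_eq_zero] at this
    linarith
  obtain ⟨w, hw⟩ := nonempty_of_measure_ne_zero hpos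
  exact ⟨w, hw.1, not_not.mp hw.2⟩

/-- equality of integrals gives equality of measures. -/
lemma cxle_toReal_eq (hX : Measurable X) (hX' : Measurable X')
    {s t : Set Ω} (hs : MeasurableSet s) (ht : MeasurableSet t)
    (h : CxLE P (condProb P X s) P (condProb P X' t)) :
    (P s).toReal = (P t).toReal := by
  have := cxle_mean h
  rwa [condProb_integral hX hs, condProb_integral hX' ht] at this

lemma cxle_limit (hX : Measurable X) (hX' : Measurable X')
    {s t : Set Ω} (hs : MeasurableSet s) (ht : MeasurableSet t)
    {u w : ℕ → Set Ω} (hu : ∀ n, MeasurableSet (u n)) (hw : ∀ n, MeasurableSet (w n))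
    (hsub_s : (∀ n, u n ⊆ s) ∨ (∀ n, s ⊆ u n))
    (hsub_t : (∀ n, w n ⊆ t) ∨ (∀ n, t ⊆ w n))
    (hconv_s : Tendsto (fun n => (P (u n)).toReal) atTop (𝓝 ((P s).toReal)))
    (hconv_t : Tendsto (fun n => (P (w n)).toReal) atTop (𝓝 ((P t).toReal)))
    (hcx : ∀ n, CxLE P (condProb P X (u n)) P (condProb P X' (w n))) :
    CxLE P (condProb P X s) P (condProb P X' t) := by
  intro φ hφ
  exact le_of_tendsto_of_tendsto'
    (tendsto_integral_phi_condProb hX hφ hs hu hsub_s hconv_s)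
    (tendsto_integral_phi_condProb hX' hφ ht hw hsub_t hconv_t)
    (fun n => hcx n φ hφ)

end Main

section Hard

variable {β γ : Type*} [MeasurableSpace β] [MeasurableSpace γ] {X : Ω → β} {X' : Ω → γ}
variable {Y Y' : Ω → ℝ}

lemma condProb_null (hX : Measurable X) {s : Set Ω} (h : P s = 0) :
    condProb P X s =ᵐ[P] fun _ => (0:ℝ) := by
  have h1 : s =ᵐ[P] (∅ : Set Ω) := ae_eq_empty.mpr h
  calc condProb P X s =ᵐ[P] condProb P X ∅ := condProb_congr h1
    _ =ᵐ[P] fun _ => (0:ℝ) := by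
        rw [condProb, Set.indicator_empty]
        rw [show (fun _ : Ω => (0:ℝ)) = (0 : Ω → ℝ) by rfl, condExp_zero]

lemma condProb_full (hX : Measurable X) {s : Set Ω} (hs : MeasurableSet s) (h : P s = 1) :
    condProb P X s =ᵐ[P] fun _ => (1:ℝ) := by
  have hcompl : P sᶜ = 0 := by
    rw [measure_compl hs (measure_ne_top _ _), h, measure_univ, tsub_self]
  have h1 : s =ᵐ[P] (univ : Set Ω) := ae_eq_univ.mpr hcompl
  calc condProb P X s =ᵐ[P] condProb P X univ := condProb_congr h1
    _ =ᵐ[P] fun _ => (1:ℝ) := by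
        rw [condProb, Set.indicator_univ, condExp_const (comap_le hX) (1:ℝ)]

/-- From a.e. equality of the `bb` means, the `aa` values agree everywhere. -/
lemma aa_eq_of_ae_mean (hY : Measurable Y) (hY' : Measurable Y')
    (hmean : ∀ᵐ w ∂unif01, bb P Y w = bb P Y' w) {v : ℝ} (hv : v ∈ Ioo (0:ℝ) 1) :
    aa P Y v = aa P Y' v := by
  have key : ∀ Z Z' : Ω → ℝ, Measurable Z → Measurable Z' →
      (∀ᵐ w ∂unif01, bb P Z w = bb P Z' w) → ∀ u ∈ Ioo (0:ℝ) 1,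
      ¬ (aa P Z' u < aa P Z u) := by
    intro Z Z' hZ hZ' hm u hu hlt
    obtain ⟨w, hw, hQ⟩ := exists_good hm (aa_nonneg P Z' u) hlt
      (le_trans (aa_le hZ hu.1) hu.2.le)
    have hw0 : 0 < w := lt_of_le_of_lt (aa_nonneg P Z' u) hw.1
    have hq1 := quant_lt_of_lt_aa hZ hw0 hw.2
    have hq2 : quantRV P Z' w = quantRV P Z' u :=
      quant_eq_of_mem hZ' hw.1
        (le_trans (le_of_lt (lt_of_lt_of_le hw.2 (aa_le hZ hu.1)))
          (le_bb hZ' hu))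
    have hbZ' : u ≤ bb P Z' w := by
      rw [bb_eq_of_quant_eq hq2]
      exact le_bb hZ' hu
    have hbZ : u ≤ bb P Z w := by rw [hQ]; exact hbZ'
    have : quantRV P Z u ≤ quantRV P Z w := quant_le hZ hu.1 hbZ
    linarith [hq1.1]
  rcases lt_trichotomy (aa P Y v) (aa P Y' v) with h | h | h
  · exact absurd h (key Y' Y hY' hY (by filter_upwards [hmean] with w hw; rw [hw]) v hv)
  · exact h
  · exact absurd h (key Y Y' hY hY' hmean v hv)

/-- (iii) ⟹ (ii) : a.e. cx-comparison of `P(Y ≤ q_v | X)` gives the comparison of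
`P(Y < q_v | X)` for every `v`. -/
lemma lt_of_le_ae (hY : Measurable Y) (hX : Measurable X)
    (hY' : Measurable Y') (hX' : Measurable X')
    (H : ∀ᵐ v ∂unif01, CxLE P (condProb P X {ω | Y ω ≤ quantRV P Y v})
      P (condProb P X' {ω | Y' ω ≤ quantRV P Y' v})) :
    ∀ v ∈ Ioo (0:ℝ) 1, CxLE P (condProb P X {ω | Y ω < quantRV P Y v})
      P (condProb P X' {ω | Y' ω < quantRV P Y' v}) := by
  have hmean : ∀ᵐ w ∂unif01, bb P Y w = bb P Y' w := by
    filter_upwards [H] with w hw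
    exact cxle_toReal_eq hX hX' (hY measurableSet_Iic) (hY' measurableSet_Iic) hw
  intro v hv
  have haeq : aa P Y v = aa P Y' v := aa_eq_of_ae_mean hY hY' hmean hv
  set a := aa P Y v with ha
  rcases eq_or_lt_of_le (aa_nonneg P Y v) with h0 | h0
  · -- a = 0 : both events are null
    have hz : P {ω | Y ω < quantRV P Y v} = 0 := by
      have : (P {ω | Y ω < quantRV P Y v}).toReal = 0 := h0.symm
      rcases (ENNReal.toReal_eq_zero_iff _).mp this with h | h
      · exact h
      · exact absurd h (measure_ne_top _ _)
    have hz' : P {ω | Y' ω < quantRV P Y' v} = 0 := by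
      have : (P {ω | Y' ω < quantRV P Y' v}).toReal = 0 := by
        rw [show (P {ω | Y' ω < quantRV P Y' v}).toReal = aa P Y' v from rfl, ← haeq]
        exact h0.symm
      rcases (ENNReal.toReal_eq_zero_iff _).mp this with h | h
      · exact h
      · exact absurd h (measure_ne_top _ _)
    exact cxle_of_ae_eq ((condProb_null hX hz).trans (condProb_null hX' hz').symm)
  · -- 0 < a : approximate from below
    have hav : a ≤ v := aa_le hY hv.1
    have hsel : ∀ n : ℕ, ∃ w, w ∈ Ioo (a - min (a/2) (1/((n:ℝ)+1))) a ∧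
        CxLE P (condProb P X {ω | Y ω ≤ quantRV P Y w})
          P (condProb P X' {ω | Y' ω ≤ quantRV P Y' w}) := by
      intro n
      have hmin : 0 < min (a/2) (1/((n:ℝ)+1)) := by positivity
      apply exists_good H
      · linarith [min_le_left (a/2) (1/((n:ℝ)+1))]
      · linarith
      · linarith [hv.2]
    choose w hwmem hwcx using hsel
    have hw0 : ∀ n, 0 < w n := by
      intro n
      have := (hwmem n).1
      have := min_le_left (a/2) (1/((n:ℝ)+1))
      linarith
    have hwa : ∀ n, w n < a := fun n => (hwmem n).2
    have hwIoo : ∀ n, w n ∈ Ioo (0:ℝ) 1 := fun n => ⟨hw0 n, by linarith [hwa n, hav, hv.2]⟩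
    -- the approximating sets
    have hsubY : ∀ n, {ω | Y ω ≤ quantRV P Y (w n)} ⊆ {ω | Y ω < quantRV P Y v} :=
      fun n => (quant_lt_of_lt_aa hY (hw0 n) (hwa n)).2
    have hsubY' : ∀ n, {ω | Y' ω ≤ quantRV P Y' (w n)} ⊆ {ω | Y' ω < quantRV P Y' v} :=
      fun n => (quant_lt_of_lt_aa hY' (hw0 n) (haeq ▸ hwa n)).2
    have hlow : ∀ n : ℕ, a - 1/((n:ℝ)+1) ≤ w n := by
      intro n
      have := (hwmem n).1
      have := min_le_right (a/2) (1/((n:ℝ)+1))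
      linarith
    have htendw : Tendsto (fun n : ℕ => a - 1/((n:ℝ)+1)) atTop (𝓝 a) := by
      have : Tendsto (fun n : ℕ => 1/((n:ℝ)+1)) atTop (𝓝 0) :=
        tendsto_one_div_add_atTop_nhds_zero_nat
      simpa using (tendsto_const_nhds (x := a) (f := atTop (α := ℕ))).sub this
    have hconvY : Tendsto (fun n => (P {ω | Y ω ≤ quantRV P Y (w n)}).toReal) atTop
        (𝓝 ((P {ω | Y ω < quantRV P Y v}).toReal)) := by
      apply tendsto_of_tendsto_of_tendsto_of_le_of_le htendw tendsto_const_nhds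
      · intro n
        calc a - 1/((n:ℝ)+1) ≤ w n := hlow n
          _ ≤ bb P Y (w n) := le_bb hY (hwIoo n)
      · intro n
        exact ENNReal.toReal_mono (measure_ne_top _ _) (measure_mono (hsubY n))
    have hconvY' : Tendsto (fun n => (P {ω | Y' ω ≤ quantRV P Y' (w n)}).toReal) atTop
        (𝓝 ((P {ω | Y' ω < quantRV P Y' v}).toReal)) := by
      have haa' : (P {ω | Y' ω < quantRV P Y' v}).toReal = a := haeq.symm
      rw [haa']
      apply tendsto_of_tendsto_of_tendsto_of_le_of_le htendw tendsto_const_nhds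
      · intro n
        calc a - 1/((n:ℝ)+1) ≤ w n := hlow n
          _ ≤ bb P Y' (w n) := le_bb hY' (hwIoo n)
      · intro n
        have h1 : (P {ω | Y' ω ≤ quantRV P Y' (w n)}).toReal
            ≤ (P {ω | Y' ω < quantRV P Y' v}).toReal :=
          ENNReal.toReal_mono (measure_ne_top _ _) (measure_mono (hsubY' n))
        rw [show (P {ω | Y' ω < quantRV P Y' v}).toReal = a from haeq.symm] at h1
        exact h1
    exact cxle_limit hX hX' (hY measurableSet_Iio) (hY' measurableSet_Iio)
      (fun n => hY measurableSet_Iic) (fun n => hY' measurableSet_Iic)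
      (Or.inl hsubY) (Or.inl hsubY') hconvY hconvY' hwcx

end Hard

section Hard2

variable {β γ : Type*} [MeasurableSpace β] [MeasurableSpace γ] {X : Ω → β} {X' : Ω → γ}
variable {Y Y' : Ω → ℝ}

/-- the countable exceptional set for a random variable. -/
def badSet (P : Measure Ω) (Z : Ω → ℝ) : Set ℝ :=
  ⋃ r : ℚ, ({aa P Z (r:ℝ)} ∪ {bb P Z (r:ℝ)})

lemma badSet_countable : (badSet P Z).Countable :=
  Set.countable_iUnion (fun r => (Set.countable_singleton _).union (Set.countable_singleton _))

/-- Away from the bad set, there are no one-sided atom-interval endpoints. -/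
lemma not_bad (hZ : Measurable Z) {v : ℝ} (hv : v ∈ Ioo (0:ℝ) 1) (hB : v ∉ badSet P Z) :
    ¬ (aa P Z v < v ∧ v = bb P Z v) ∧ ¬ (aa P Z v = v ∧ v < bb P Z v) := by
  constructor
  · rintro ⟨h1, h2⟩
    obtain ⟨r, hr1, hr2⟩ := exists_rat_btwn h1
    have hq : quantRV P Z (r:ℝ) = quantRV P Z v :=
      quant_eq_of_mem hZ hr1 (by rw [← h2]; exact hr2.le)
    apply hB
    rw [badSet]
    refine mem_iUnion.mpr ⟨r, ?_⟩
    right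
    rw [mem_singleton_iff, bb_eq_of_quant_eq hq, ← h2]
  · rintro ⟨h1, h2⟩
    have hmin : v < min (bb P Z v) 1 := lt_min h2 hv.2
    obtain ⟨r, hr1, hr2⟩ := exists_rat_btwn hmin
    have hq : quantRV P Z (r:ℝ) = quantRV P Z v :=
      quant_eq_of_mem hZ (by rw [h1]; exact hr1)
        (le_trans hr2.le (min_le_left _ _))
    apply hB
    rw [badSet]
    refine mem_iUnion.mpr ⟨r, ?_⟩
    left
    rw [mem_singleton_iff, aa_eq_of_quant_eq hq, h1]

/-- (ii) ⟹ (iii). -/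
lemma le_ae_of_lt (hY : Measurable Y) (hX : Measurable X)
    (hY' : Measurable Y') (hX' : Measurable X')
    (H : ∀ v ∈ Ioo (0:ℝ) 1, CxLE P (condProb P X {ω | Y ω < quantRV P Y v})
      P (condProb P X' {ω | Y' ω < quantRV P Y' v})) :
    ∀ᵐ v ∂unif01, CxLE P (condProb P X {ω | Y ω ≤ quantRV P Y v})
      P (condProb P X' {ω | Y' ω ≤ quantRV P Y' v}) := by
  have hamean : ∀ v ∈ Ioo (0:ℝ) 1, aa P Y v = aa P Y' v := fun v hv =>
    cxle_toReal_eq hX hX' (hY measurableSet_Iio) (hY' measurableSet_Iio) (H v hv)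
  -- the full bad set
  set B : Set ℝ := badSet P Y ∪ badSet P Y' with hB
  have hBnull : unif01 B = 0 := by
    have hc : B.Countable := (badSet_countable (P := P) (Z := Y)).union
      (badSet_countable (P := P) (Z := Y'))
    have hv0 : volume B = 0 := hc.measure_zero volume
    have : unif01 B ≤ volume B := Measure.le_iff'.mp (Measure.restrict_le_self) B
    rw [hv0] at this
    exact le_antisymm this zero_le
  have hae1 : ∀ᵐ v ∂unif01, v ∉ B := by
    rw [ae_iff]
    simpa using hBnull
  filter_upwards [ae_restrict_mem measurableSet_Ioo, hae1] with v hv hvB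
  have hvB1 : v ∉ badSet P Y := fun h => hvB (Or.inl h)
  have hvB2 : v ∉ badSet P Y' := fun h => hvB (Or.inr h)
  -- good v : main case analysis
  have hgood := not_bad hY hv hvB1
  have hgood' := not_bad hY' hv hvB2
  have hva : aa P Y v ≤ v := aa_le hY hv.1
  have hvb : v ≤ bb P Y v := le_bb hY hv
  have hva' : aa P Y' v ≤ v := aa_le hY' hv.1
  have hvb' : v ≤ bb P Y' v := le_bb hY' hv
  have haeq : aa P Y v = aa P Y' v := hamean v hv
  rcases eq_or_lt_of_le (aa_le_bb (P := P) (Z := Y) v) with hcont | hatom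
  · -- continuity point for Y; then also for Y'
    have havv : aa P Y v = v := by
      rcases lt_or_eq_of_le hva with h | h
      · exfalso; exact hgood.1 ⟨h, by linarith [hcont, hvb, hva]⟩
      · exact h
    have hbvv : bb P Y v = v := by rw [← hcont, havv]
    have havv' : aa P Y' v = v := by rw [← haeq, havv]
    have hbvv' : bb P Y' v = v := by
      rcases lt_or_eq_of_le hvb' with h | h
      · exact absurd ⟨havv', h⟩ hgood'.2
      · exact h.symm
    -- both LE sets are a.e. equal to the LT sets
    have hPeq : P {ω | Y ω ≤ quantRV P Y v} = P {ω | Y ω < quantRV P Y v} := by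
      apply (ENNReal.toReal_eq_toReal_iff' (measure_ne_top _ _) (measure_ne_top _ _)).mp
      rw [show (P {ω | Y ω ≤ quantRV P Y v}).toReal = bb P Y v from rfl,
        show (P {ω | Y ω < quantRV P Y v}).toReal = aa P Y v from rfl, hcont]
    have hPeq' : P {ω | Y' ω ≤ quantRV P Y' v} = P {ω | Y' ω < quantRV P Y' v} := by
      apply (ENNReal.toReal_eq_toReal_iff' (measure_ne_top _ _) (measure_ne_top _ _)).mp
      rw [show (P {ω | Y' ω ≤ quantRV P Y' v}).toReal = bb P Y' v from rfl,
        show (P {ω | Y' ω < quantRV P Y' v}).toReal = aa P Y' v from rfl, hbvv', havv']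
    have hae : {ω | Y ω < quantRV P Y v} =ᵐ[P] {ω | Y ω ≤ quantRV P Y v} :=
      ae_eq_of_subset_of_measure_ge
        (setOf_subset_setOf.mpr (fun ω h => le_of_lt h))
        (le_of_eq hPeq) ((hY measurableSet_Iio).nullMeasurableSet) (measure_ne_top _ _)
    have hae' : {ω | Y' ω < quantRV P Y' v} =ᵐ[P] {ω | Y' ω ≤ quantRV P Y' v} :=
      ae_eq_of_subset_of_measure_ge
        (setOf_subset_setOf.mpr (fun ω h => le_of_lt h))
        (le_of_eq hPeq') ((hY' measurableSet_Iio).nullMeasurableSet) (measure_ne_top _ _)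
    exact cxle_congr (condProb_congr hae) (condProb_congr hae') (H v hv)
  · -- atom case : aa P Y v < v < bb P Y v   (interior)
    have hint : aa P Y v < v ∧ v < bb P Y v := by
      constructor
      · rcases lt_or_eq_of_le hva with h | h
        · exact h
        · exact absurd ⟨h, by linarith⟩ hgood.2
      · rcases lt_or_eq_of_le hvb with h | h
        · exact h
        · exact absurd ⟨by linarith, h⟩ hgood.1
    set a0 := aa P Y v with ha0
    set b0 := bb P Y v with hb0
    -- on J = Ioo a0 (min b0 1) the quantiles are constant
    have hqY : ∀ w ∈ Ioo a0 (min b0 1), quantRV P Y w = quantRV P Y v := by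
      intro w hw
      exact quant_eq_of_mem hY hw.1 (le_trans hw.2.le (min_le_left _ _))
    have hwIoo : ∀ w ∈ Ioo a0 (min b0 1), w ∈ Ioo (0:ℝ) 1 := by
      intro w hw
      exact ⟨lt_of_le_of_lt (aa_nonneg P Y v) hw.1, lt_of_lt_of_le hw.2 (min_le_right _ _)⟩
    have haY' : ∀ w ∈ Ioo a0 (min b0 1), aa P Y' w = a0 := by
      intro w hw
      rw [← hamean w (hwIoo w hw), aa_eq_of_quant_eq (hqY w hw)]
    have hvJ : v ∈ Ioo a0 (min b0 1) := ⟨hint.1, lt_min hint.2 hv.2⟩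
    have hqY' : ∀ w ∈ Ioo a0 (min b0 1), quantRV P Y' w = quantRV P Y' v := by
      intro w hw
      exact quant_const_of_aa_const hY' (hwIoo w hw) hv hw.1 hint.1
        (haY' w hw) (by rw [← haeq])
    rcases lt_or_ge b0 1 with hb1 | hb1
    · -- b0 < 1
      -- first : bb P Y' v = b0
      have hb0' : bb P Y' v = b0 := by
        have hge : b0 ≤ bb P Y' v := by
          by_contra hcon
          push_neg at hcon
          obtain ⟨w, hw1, hw2⟩ := exists_rat_btwn (lt_of_lt_of_le hcon le_rfl)
          -- w ∈ (bb Y' v, b0), also w > a0 ; then q' w = q' v impossible? use hqY'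
          have hwJ : (w:ℝ) ∈ Ioo a0 (min b0 1) := by
            constructor
            · exact lt_trans (lt_of_lt_of_le hint.1 (by linarith [hvb'])) hw1
            · exact lt_min hw2 (lt_trans hw2 hb1)
          have := bb_eq_of_quant_eq (hqY' _ hwJ)
          have hwle : (w:ℝ) ≤ bb P Y' (w:ℝ) := le_bb hY' (hwIoo _ hwJ)
          rw [this] at hwle
          linarith
        have hle : bb P Y' v ≤ b0 := by
          by_contra hcon
          push_neg at hcon
          obtain ⟨w, hw1, hw2⟩ := exists_rat_btwn (lt_min hcon (lt_of_le_of_lt (le_refl _) hb1 : b0 < 1))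
          have hw2b : (w:ℝ) < bb P Y' v := lt_of_lt_of_le hw2 (min_le_left _ _)
          have hw21 : (w:ℝ) < 1 := lt_of_lt_of_le hw2 (min_le_right _ _)
          have hwIoo2 : (w:ℝ) ∈ Ioo (0:ℝ) 1 := ⟨lt_of_le_of_lt (ENNReal.toReal_nonneg) hw1, hw21⟩
          -- q' w = q' v via quant_eq_of_mem for Y'
          have hq'w : quantRV P Y' (w:ℝ) = quantRV P Y' v :=
            quant_eq_of_mem hY' (by rw [← haeq]; linarith [hint.1]) hw2b.le
          have haw' : aa P Y' (w:ℝ) = aa P Y' v := aa_eq_of_quant_eq hq'w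
          have haw : aa P Y (w:ℝ) = a0 := by
            rw [hamean _ hwIoo2, haw', ← haeq]
          -- but b0 < w forces aa P Y w ≥ b0
          have hsub := (quant_lt_of_bb_lt hY hw1 hwIoo2).2
          have : b0 ≤ aa P Y (w:ℝ) := bb_le_aa_of_subset hsub
          rw [haw] at this
          linarith [hint.1, hint.2]
        linarith
      -- approximating sequence from above
      have hb0v : 0 < b0 := lt_trans hv.1 hint.2
      set wseq : ℕ → ℝ := fun n => b0 + min ((1 - b0)/2) (1/((n:ℝ)+1)) with hwseq
      have hwgt : ∀ n, b0 < wseq n := by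
        intro n
        have : (0:ℝ) < min ((1 - b0)/2) (1/((n:ℝ)+1)) := by
          apply lt_min (by linarith) (by positivity)
        simp only [hwseq]
        linarith
      have hwlt1 : ∀ n, wseq n < 1 := by
        intro n
        have : min ((1 - b0)/2) (1/((n:ℝ)+1)) ≤ (1 - b0)/2 := min_le_left _ _
        simp only [hwseq]
        linarith
      have hwIoo2 : ∀ n, wseq n ∈ Ioo (0:ℝ) 1 := fun n => ⟨lt_trans hb0v (hwgt n), hwlt1 n⟩
      have hwub : ∀ n : ℕ, wseq n ≤ b0 + 1/((n:ℝ)+1) := by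
        intro n
        have : min ((1 - b0)/2) (1/((n:ℝ)+1)) ≤ 1/((n:ℝ)+1) := min_le_right _ _
        simp only [hwseq]
        linarith
      have hsubY : ∀ n, {ω | Y ω ≤ quantRV P Y v} ⊆ {ω | Y ω < quantRV P Y (wseq n)} :=
        fun n => (quant_lt_of_bb_lt hY (hwgt n) (hwIoo2 n)).2
      have hsubY' : ∀ n, {ω | Y' ω ≤ quantRV P Y' v} ⊆ {ω | Y' ω < quantRV P Y' (wseq n)} :=
        fun n => (quant_lt_of_bb_lt hY' (by rw [hb0']; exact hwgt n) (hwIoo2 n)).2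
      have htendw : Tendsto (fun n : ℕ => b0 + 1/((n:ℝ)+1)) atTop (𝓝 b0) := by
        have : Tendsto (fun n : ℕ => 1/((n:ℝ)+1)) atTop (𝓝 0) :=
          tendsto_one_div_add_atTop_nhds_zero_nat
        simpa using (tendsto_const_nhds (x := b0) (f := atTop (α := ℕ))).add this
      have hconvY : Tendsto (fun n => (P {ω | Y ω < quantRV P Y (wseq n)}).toReal) atTop
          (𝓝 ((P {ω | Y ω ≤ quantRV P Y v}).toReal)) := by
        apply tendsto_of_tendsto_of_tendsto_of_le_of_le tendsto_const_nhds htendw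
        · intro n
          exact bb_le_aa_of_subset (hsubY n)
        · intro n
          calc aa P Y (wseq n) ≤ wseq n := aa_le hY (hwIoo2 n).1
            _ ≤ b0 + 1/((n:ℝ)+1) := hwub n
      have hconvY' : Tendsto (fun n => (P {ω | Y' ω < quantRV P Y' (wseq n)}).toReal) atTop
          (𝓝 ((P {ω | Y' ω ≤ quantRV P Y' v}).toReal)) := by
        have : (P {ω | Y' ω ≤ quantRV P Y' v}).toReal = b0 := hb0'
        rw [this]
        apply tendsto_of_tendsto_of_tendsto_of_le_of_le tendsto_const_nhds htendw
        · intro n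
          have := bb_le_aa_of_subset (hsubY' n)
          rw [show bb P Y' v = b0 from hb0'] at this
          exact this
        · intro n
          calc aa P Y' (wseq n) ≤ wseq n := aa_le hY' (hwIoo2 n).1
            _ ≤ b0 + 1/((n:ℝ)+1) := hwub n
      exact cxle_limit hX hX' (hY measurableSet_Iic) (hY' measurableSet_Iic)
        (fun n => hY measurableSet_Iio) (fun n => hY' measurableSet_Iio)
        (Or.inr hsubY) (Or.inr hsubY') hconvY hconvY'
        (fun n => H (wseq n) (hwIoo2 n))
    · -- b0 = 1 : both LE events have full measure
      have hb0e : b0 = 1 := le_antisymm (bb_le_one P Y v) hb1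
      have hb0'e : bb P Y' v = 1 := by
        apply le_antisymm (bb_le_one P Y' v)
        by_contra hcon
        push_neg at hcon
        set m := max (bb P Y' v) v with hm
        have hm1 : m < 1 := max_lt hcon hv.2
        obtain ⟨w, hw1, hw2⟩ := exists_rat_btwn hm1
        have hwJ : (w:ℝ) ∈ Ioo a0 (min b0 1) := by
          constructor
          · exact lt_trans (lt_of_lt_of_le hint.1 (le_max_right _ _)) hw1
          · rw [hb0e]; simpa using hw2
        have hq'w := hqY' _ hwJ
        have hwle : (w:ℝ) ≤ bb P Y' (w:ℝ) := le_bb hY' (hwIoo _ hwJ)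
        rw [bb_eq_of_quant_eq hq'w] at hwle
        have : bb P Y' v < (w:ℝ) := lt_of_le_of_lt (le_max_left _ _) hw1
        linarith
      have hfullY : P {ω | Y ω ≤ quantRV P Y v} = 1 := by
        apply (ENNReal.toReal_eq_toReal_iff' (measure_ne_top _ _) (by simp)).mp
        rw [show (P {ω | Y ω ≤ quantRV P Y v}).toReal = b0 from rfl, hb0e]
        simp
      have hfullY' : P {ω | Y' ω ≤ quantRV P Y' v} = 1 := by
        apply (ENNReal.toReal_eq_toReal_iff' (measure_ne_top _ _) (by simp)).mp
        rw [show (P {ω | Y' ω ≤ quantRV P Y' v}).toReal = bb P Y' v from rfl, hb0'e]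
        simp
      exact cxle_of_ae_eq ((condProb_full hX (hY measurableSet_Iic) hfullY).trans
        (condProb_full hX' (hY' measurableSet_Iic) hfullY').symm)

end Hard2

section Compl

variable {β γ : Type*} [MeasurableSpace β] [MeasurableSpace γ] {X : Ω → β} {X' : Ω → γ}

lemma cxle_compl_iff (hX : Measurable X) (hX' : Measurable X') {s t : Set Ω}
    (hs : MeasurableSet s) (ht : MeasurableSet t) :
    CxLE P (condProb P X s) P (condProb P X' t) ↔
      CxLE P (condProb P X sᶜ) P (condProb P X' tᶜ) := by
  have fwd : ∀ (s t : Set Ω), MeasurableSet s → MeasurableSet t →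
      CxLE P (condProb P X s) P (condProb P X' t) →
      CxLE P (condProb P X sᶜ) P (condProb P X' tᶜ) := by
    intro s t hs ht h
    exact cxle_congr (condProb_compl hX hs).symm (condProb_compl hX' ht).symm
      (cxle_one_sub h)
  constructor
  · exact fwd s t hs ht
  · intro h
    have := fwd sᶜ tᶜ hs.compl ht.compl h
    simpa [compl_compl] using this

end Compl

end CCXProof

open CCXPaper in
/-- Equivalent versions of the conditional convex order: (i) the
definition via `P(Y ≥ q_Y(v) | X)` for all `v ∈ (0,1)`; (ii) via
`P(Y < q_Y(v) | X)` for all `v ∈ (0,1)`; (iii) via `P(Y ≤ q_Y(v) | X)` for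
Lebesgue-a.e. `v ∈ (0,1)`; (iv) via `P(Y > q_Y(v) | X)` for Lebesgue-a.e.
`v ∈ (0,1)`. -/
theorem ccx_equivalent_versions
    {Ω : Type*} [MeasurableSpace Ω] (P : Measure Ω) [IsProbabilityMeasure P]
    (hPna : Nonatomic P)
    {p p' : ℕ} (Y Y' : Ω → ℝ) (X : Ω → Fin p → ℝ) (X' : Ω → Fin p' → ℝ)
    (hY : Measurable Y) (hX : Measurable X)
    (hY' : Measurable Y') (hX' : Measurable X') :
    (CCX P Y X P Y' X' ↔
      ∀ v ∈ Set.Ioo (0 : ℝ) 1,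
        CxLE P (condProbLT P Y X (quantRV P Y v))
          P (condProbLT P Y' X' (quantRV P Y' v))) ∧
    (CCX P Y X P Y' X' ↔
      ∀ᵐ v ∂unif01,
        CxLE P (condProbLE P Y X (quantRV P Y v))
          P (condProbLE P Y' X' (quantRV P Y' v))) ∧
    (CCX P Y X P Y' X' ↔
      ∀ᵐ v ∂unif01,
        CxLE P (condProbGT P Y X (quantRV P Y v))
          P (condProbGT P Y' X' (quantRV P Y' v))) := by
  have iff1 : CCX P Y X P Y' X' ↔
      (∀ v ∈ Set.Ioo (0:ℝ) 1, CxLE P (condProbLT P Y X (quantRV P Y v))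
        P (condProbLT P Y' X' (quantRV P Y' v))) := by
    unfold CCX condProbGE condProbLT
    apply forall₂_congr
    intro v hv
    have h1 : {ω | Y ω < quantRV P Y v} = {ω | quantRV P Y v ≤ Y ω}ᶜ := by
      ext ω; simp [not_le]
    have h2 : {ω | Y' ω < quantRV P Y' v} = {ω | quantRV P Y' v ≤ Y' ω}ᶜ := by
      ext ω; simp [not_le]
    rw [h1, h2]
    exact CCXProof.cxle_compl_iff hX hX' (hY measurableSet_Ici) (hY' measurableSet_Ici)
  have iff2 : CCX P Y X P Y' X' ↔
      (∀ᵐ v ∂unif01, CxLE P (condProbLE P Y X (quantRV P Y v))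
        P (condProbLE P Y' X' (quantRV P Y' v))) := by
    rw [iff1]
    constructor
    · intro h
      exact CCXProof.le_ae_of_lt hY hX hY' hX' h
    · intro h
      exact CCXProof.lt_of_le_ae hY hX hY' hX' h
  have iff34 : (∀ᵐ v ∂unif01, CxLE P (condProbLE P Y X (quantRV P Y v))
        P (condProbLE P Y' X' (quantRV P Y' v))) ↔
      (∀ᵐ v ∂unif01, CxLE P (condProbGT P Y X (quantRV P Y v))
        P (condProbGT P Y' X' (quantRV P Y' v))) := by
    apply eventually_congr
    apply Filter.Eventually.of_forall
    intro v
    have h1 : {ω | quantRV P Y v < Y ω} = {ω | Y ω ≤ quantRV P Y v}ᶜ := by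
      ext ω; simp [not_le]
    have h2 : {ω | quantRV P Y' v < Y' ω} = {ω | Y' ω ≤ quantRV P Y' v}ᶜ := by
      ext ω; simp [not_le]
    show CxLE P (condProb P X {ω | Y ω ≤ quantRV P Y v})
        P (condProb P X' {ω | Y' ω ≤ quantRV P Y' v}) ↔
      CxLE P (condProb P X {ω | quantRV P Y v < Y ω})
        P (condProb P X' {ω | quantRV P Y' v < Y' ω})
    rw [h1, h2]
    exact CCXProof.cxle_compl_iff hX hX' (hY measurableSet_Iic) (hY' measurableSet_Iic)
  exact ⟨iff1, iff2, iff2.trans iff34⟩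
end
end
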